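/- arXiv:0804.1401 — 4 statements merged into one kernel-verified Lean document; each statement's English description precedes it below -/
import Mathlib

section
/- In the braid group B_n, for every i with 1 ≤ i ≤ n-1, σ_i^{-1} = θ^{-1} ρ^{2-i} (σ_1 ρ)^{n-2} ρ^{i-1}, where ρ = σ_{n-1}⋯σ_1 and θ is the full twist. -/
/-- The braid relations on `n` strands, on generators indexed by `Fin (n-1)`
(index `k` represents the Artin generator `σ_{k+1}`). -/
def braidRels (n : ℕ) : Set (FreeGroup (Fin (n - 1))) :=
  {r | (∃ i j : Fin (n - 1), (i : ℕ) + 2 ≤ (j : ℕ) ∧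
          r = FreeGroup.of i * FreeGroup.of j * (FreeGroup.of i)⁻¹ * (FreeGroup.of j)⁻¹) ∨
       (∃ i j : Fin (n - 1), (i : ℕ) + 1 = (j : ℕ) ∧
          r = (FreeGroup.of i * FreeGroup.of j * FreeGroup.of i) *
              (FreeGroup.of j * FreeGroup.of i * FreeGroup.of j)⁻¹)}

/-- The braid group `B_n`. -/
abbrev BraidGroup (n : ℕ) := PresentedGroup (braidRels n)

/-- The Artin generator `σ_i` of `B_n`, for `1 ≤ i ≤ n-1` (junk value `1` otherwise). -/
noncomputable def σ (n i : ℕ) : BraidGroup n :=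
  if h : 1 ≤ i ∧ i ≤ n - 1 then PresentedGroup.of (⟨i - 1, by omega⟩ : Fin (n - 1)) else 1

/-- `ρ = σ_{n-1} ⋯ σ_2 σ_1`. -/
noncomputable def braidρ (n : ℕ) : BraidGroup n :=
  (((List.range (n - 1)).map (fun k => σ n (k + 1))).reverse).prod

/-- `δ = σ_1 σ_2 ⋯ σ_{n-1}`. -/
noncomputable def braidδ (n : ℕ) : BraidGroup n :=
  ((List.range (n - 1)).map (fun k => σ n (k + 1))).prod

/-- The full twist `θ = (σ_1 σ_2 ⋯ σ_{n-1})^n`. -/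
noncomputable def braidθ (n : ℕ) : BraidGroup n := braidδ n ^ n

/- ====================  Auxiliary development  ==================== -/

section Aux

lemma braid_relOne {n : ℕ} {r : FreeGroup (Fin (n-1))} (h : r ∈ braidRels n) :
    PresentedGroup.mk (braidRels n) r = 1 :=
  (QuotientGroup.eq_one_iff r).mpr (Subgroup.subset_normalClosure h)

lemma braid_of_comm {n : ℕ} (i j : Fin (n-1)) (h : (i : ℕ) + 2 ≤ (j : ℕ)) :
    (PresentedGroup.of i : BraidGroup n) * PresentedGroup.of j
      = PresentedGroup.of j * PresentedGroup.of i := by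
  have h1 := braid_relOne (n := n) (Or.inl ⟨i, j, h, rfl⟩)
  simp only [map_mul, map_inv] at h1
  have h2 : (PresentedGroup.mk (braidRels n) (FreeGroup.of i)) = PresentedGroup.of i := rfl
  have h3 : (PresentedGroup.mk (braidRels n) (FreeGroup.of j)) = PresentedGroup.of j := rfl
  rw [h2, h3] at h1
  have h4 := mul_inv_eq_one.mp h1
  exact mul_inv_eq_iff_eq_mul.mp h4

lemma braid_of_braid {n : ℕ} (i j : Fin (n-1)) (h : (i : ℕ) + 1 = (j : ℕ)) :
    (PresentedGroup.of i : BraidGroup n) * PresentedGroup.of j * PresentedGroup.of i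
      = PresentedGroup.of j * PresentedGroup.of i * PresentedGroup.of j := by
  have h1 := braid_relOne (n := n) (Or.inr ⟨i, j, h, rfl⟩)
  simp only [map_mul, map_inv] at h1
  have h2 : (PresentedGroup.mk (braidRels n) (FreeGroup.of i)) = PresentedGroup.of i := rfl
  have h3 : (PresentedGroup.mk (braidRels n) (FreeGroup.of j)) = PresentedGroup.of j := rfl
  rw [h2, h3] at h1
  exact mul_inv_eq_one.mp h1

lemma sigma_of {n i : ℕ} (h1 : 1 ≤ i) (h2 : i ≤ n - 1) :
    σ n i = PresentedGroup.of (⟨i - 1, by omega⟩ : Fin (n - 1)) :=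
  dif_pos ⟨h1, h2⟩

lemma sigma_comm {n : ℕ} {j m : ℕ} (h1 : 1 ≤ j) (h2 : j + 2 ≤ m) (h3 : m ≤ n - 1) :
    σ n j * σ n m = σ n m * σ n j := by
  rw [sigma_of h1 (by omega), sigma_of (by omega) h3]
  exact braid_of_comm _ _ (by simp; omega)

lemma sigma_braid {n : ℕ} {j : ℕ} (h1 : 1 ≤ j) (h2 : j + 1 ≤ n - 1) :
    σ n j * σ n (j+1) * σ n j = σ n (j+1) * σ n j * σ n (j+1) := by
  rw [sigma_of h1 (by omega), sigma_of (by omega) h2]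
  exact braid_of_braid _ _ (by simp; omega)

/-- ascending run `σ_a σ_{a+1} ⋯ σ_{a+l-1}` -/
noncomputable def bAsc (n a : ℕ) : ℕ → BraidGroup n
  | 0 => 1
  | l+1 => bAsc n a l * σ n (a + l)

/-- descending run `σ_{a+l-1} ⋯ σ_{a+1} σ_a` -/
noncomputable def bDesc (n a : ℕ) : ℕ → BraidGroup n
  | 0 => 1
  | l+1 => σ n (a + l) * bDesc n a l

lemma bAsc_succ (n a l : ℕ) : bAsc n a (l+1) = bAsc n a l * σ n (a + l) := rfl
lemma bDesc_succ (n a l : ℕ) : bDesc n a (l+1) = σ n (a + l) * bDesc n a l := rfl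

lemma bAsc_succ_left (n a l : ℕ) : bAsc n a (l+1) = σ n a * bAsc n (a+1) l := by
  induction l with
  | zero => simp [bAsc]
  | succ l ih =>
      rw [bAsc_succ, ih, bAsc_succ, mul_assoc, show a + (l+1) = a+1+l from by omega]

lemma bDesc_succ_right (n a l : ℕ) : bDesc n a (l+1) = bDesc n (a+1) l * σ n a := by
  induction l with
  | zero => simp [bDesc]
  | succ l ih =>
      rw [bDesc_succ, ih, bDesc_succ, ← mul_assoc, show a + (l+1) = a+1+l from by omega]

lemma comm_asc {n : ℕ} {a l m : ℕ} (ha : 1 ≤ a) (h2 : a + l + 1 ≤ m) (h3 : m ≤ n - 1) :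
    σ n m * bAsc n a l = bAsc n a l * σ n m := by
  induction l with
  | zero => simp [bAsc]
  | succ l ih =>
      rw [bAsc_succ, ← mul_assoc, ih (by omega), mul_assoc,
        ← sigma_comm (by omega) (by omega) h3, mul_assoc]

lemma comm_desc {n : ℕ} {a l m : ℕ} (ha : 1 ≤ a) (h2 : a + l + 1 ≤ m) (h3 : m ≤ n - 1) :
    σ n m * bDesc n a l = bDesc n a l * σ n m := by
  induction l with
  | zero => simp [bDesc]
  | succ l ih =>
      rw [bDesc_succ, ← mul_assoc, ← sigma_comm (by omega) (by omega) h3,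
        mul_assoc, ih (by omega), ← mul_assoc]

/-- `D_l σ_j = σ_{j+1} D_l` for `1 ≤ j ≤ l-1`. -/
lemma shiftD {n : ℕ} {l j : ℕ} (hj : 1 ≤ j) (hjl : j + 1 ≤ l) (hl : l ≤ n - 1) :
    bAsc n 1 l * σ n j = σ n (j+1) * bAsc n 1 l := by
  obtain ⟨jj, rfl⟩ : ∃ jj, j = jj + 1 := ⟨j - 1, by omega⟩
  induction l, hjl using Nat.le_induction with
  | base =>
      have e : bAsc n 1 (jj+1+1) = bAsc n 1 jj * σ n (jj+1) * σ n (jj+1+1) := by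
        rw [bAsc_succ, bAsc_succ, show (1:ℕ) + (jj+1) = jj+1+1 from by omega,
          show (1:ℕ) + jj = jj+1 from by omega]
      have hb := sigma_braid (n := n) (j := jj+1) (by omega) (by omega)
      have hca : σ n (jj+1+1) * bAsc n 1 jj = bAsc n 1 jj * σ n (jj+1+1) :=
        comm_asc (n := n) (a := 1) (l := jj) (m := jj+1+1) le_rfl (by omega) hl
      calc bAsc n 1 (jj+1+1) * σ n (jj+1)
          = bAsc n 1 jj * (σ n (jj+1) * σ n (jj+1+1) * σ n (jj+1)) := by
            rw [e]; simp only [mul_assoc]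
        _ = bAsc n 1 jj * (σ n (jj+1+1) * σ n (jj+1) * σ n (jj+1+1)) := by rw [hb]
        _ = (bAsc n 1 jj * σ n (jj+1+1)) * (σ n (jj+1) * σ n (jj+1+1)) := by
            simp only [mul_assoc]
        _ = (σ n (jj+1+1) * bAsc n 1 jj) * (σ n (jj+1) * σ n (jj+1+1)) := by rw [hca]
        _ = σ n (jj+1+1) * (bAsc n 1 jj * σ n (jj+1) * σ n (jj+1+1)) := by
            simp only [mul_assoc]
        _ = σ n (jj+1+1) * bAsc n 1 (jj+1+1) := by rw [← e]
  | succ l hl' ih =>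
      rw [bAsc_succ, mul_assoc, ← sigma_comm (by omega) (by omega) (by omega),
        ← mul_assoc, ih (by omega), mul_assoc]

/-- `R_l σ_{j+1} = σ_j R_l` for `1 ≤ j ≤ l-1`. -/
lemma shiftR {n : ℕ} {l j : ℕ} (hj : 1 ≤ j) (hjl : j + 1 ≤ l) (hl : l ≤ n - 1) :
    bDesc n 1 l * σ n (j+1) = σ n j * bDesc n 1 l := by
  obtain ⟨jj, rfl⟩ : ∃ jj, j = jj + 1 := ⟨j - 1, by omega⟩
  induction l, hjl using Nat.le_induction with
  | base =>
      have e : bDesc n 1 (jj+1+1) = σ n (jj+1+1) * (σ n (jj+1) * bDesc n 1 jj) := by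
        rw [bDesc_succ, bDesc_succ, show (1:ℕ) + (jj+1) = jj+1+1 from by omega,
          show (1:ℕ) + jj = jj+1 from by omega]
      have hb := sigma_braid (n := n) (j := jj+1) (by omega) (by omega)
      have hcd : σ n (jj+1+1) * bDesc n 1 jj = bDesc n 1 jj * σ n (jj+1+1) :=
        comm_desc (n := n) (a := 1) (l := jj) (m := jj+1+1) le_rfl (by omega) hl
      calc bDesc n 1 (jj+1+1) * σ n (jj+1+1)
          = σ n (jj+1+1) * σ n (jj+1) * (bDesc n 1 jj * σ n (jj+1+1)) := by
            rw [e]; simp only [mul_assoc]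
        _ = σ n (jj+1+1) * σ n (jj+1) * (σ n (jj+1+1) * bDesc n 1 jj) := by rw [← hcd]
        _ = (σ n (jj+1+1) * σ n (jj+1) * σ n (jj+1+1)) * bDesc n 1 jj := by
            simp only [mul_assoc]
        _ = (σ n (jj+1) * σ n (jj+1+1) * σ n (jj+1)) * bDesc n 1 jj := by rw [← hb]
        _ = σ n (jj+1) * (σ n (jj+1+1) * (σ n (jj+1) * bDesc n 1 jj)) := by
            simp only [mul_assoc]
        _ = σ n (jj+1) * bDesc n 1 (jj+1+1) := by rw [← e]
  | succ l hl' ih =>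
      rw [bDesc_succ, mul_assoc, ih (by omega), ← mul_assoc,
        ← sigma_comm (by omega) (by omega) (by omega), mul_assoc]

/-- descending run moves right through `D_l`, dropping indices by 1. -/
lemma move_desc_D {n : ℕ} {l a m : ℕ} (ha : 2 ≤ a) (hm : a + m ≤ l + 1) (hl : l ≤ n - 1) :
    bDesc n a m * bAsc n 1 l = bAsc n 1 l * bDesc n (a-1) m := by
  induction m with
  | zero => simp [bDesc]
  | succ m ih =>
      have hs : σ n (a+m) * bAsc n 1 l = bAsc n 1 l * σ n (a+m-1) := by
        have h := shiftD (n := n) (l := l) (j := a+m-1) (by omega) (by omega) hl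
        rw [show a+m-1+1 = a+m from by omega] at h
        exact h.symm
      calc bDesc n a (m+1) * bAsc n 1 l
          = σ n (a+m) * (bDesc n a m * bAsc n 1 l) := by rw [bDesc_succ, mul_assoc]
        _ = σ n (a+m) * (bAsc n 1 l * bDesc n (a-1) m) := by rw [ih (by omega)]
        _ = (σ n (a+m) * bAsc n 1 l) * bDesc n (a-1) m := by rw [mul_assoc]
        _ = bAsc n 1 l * (σ n (a+m-1) * bDesc n (a-1) m) := by rw [hs, mul_assoc]
        _ = bAsc n 1 l * bDesc n (a-1) (m+1) := by
            rw [bDesc_succ, show a-1+m = a+m-1 from by omega]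

/-- ascending run moves through `D_l`, raising indices by 1. -/
lemma move_asc_D {n : ℕ} {l a m : ℕ} (ha : 1 ≤ a) (hm : a + m ≤ l) (hl : l ≤ n - 1) :
    bAsc n 1 l * bAsc n a m = bAsc n (a+1) m * bAsc n 1 l := by
  induction m with
  | zero => simp [bAsc]
  | succ m ih =>
      have hs : bAsc n 1 l * σ n (a+m) = σ n (a+m+1) * bAsc n 1 l :=
        shiftD (by omega) (by omega) hl
      calc bAsc n 1 l * bAsc n a (m+1)
          = (bAsc n 1 l * bAsc n a m) * σ n (a+m) := by rw [bAsc_succ, mul_assoc]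
        _ = bAsc n (a+1) m * (bAsc n 1 l * σ n (a+m)) := by rw [ih (by omega), mul_assoc]
        _ = bAsc n (a+1) m * (σ n (a+m+1) * bAsc n 1 l) := by rw [hs]
        _ = bAsc n (a+1) (m+1) * bAsc n 1 l := by
            rw [bAsc_succ, show a+1+m = a+m+1 from by omega, mul_assoc]

/-- ascending run moves through `R_l`, dropping indices by 1. -/
lemma move_asc_R {n : ℕ} {l a m : ℕ} (ha : 2 ≤ a) (hm : a + m ≤ l + 1) (hl : l ≤ n - 1) :
    bDesc n 1 l * bAsc n a m = bAsc n (a-1) m * bDesc n 1 l := by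
  induction m with
  | zero => simp [bAsc]
  | succ m ih =>
      have hs : bDesc n 1 l * σ n (a+m) = σ n (a+m-1) * bDesc n 1 l := by
        have h := shiftR (n := n) (l := l) (j := a+m-1) (by omega) (by omega) hl
        rw [show a+m-1+1 = a+m from by omega] at h
        exact h
      calc bDesc n 1 l * bAsc n a (m+1)
          = (bDesc n 1 l * bAsc n a m) * σ n (a+m) := by rw [bAsc_succ, mul_assoc]
        _ = bAsc n (a-1) m * (bDesc n 1 l * σ n (a+m)) := by rw [ih (by omega), mul_assoc]
        _ = bAsc n (a-1) m * (σ n (a+m-1) * bDesc n 1 l) := by rw [hs]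
        _ = bAsc n (a-1) (m+1) * bDesc n 1 l := by
            rw [bAsc_succ, show a-1+m = a+m-1 from by omega, mul_assoc]

/-- descending run moves through `R_l`, raising indices by 1. -/
lemma move_desc_R {n : ℕ} {l a m : ℕ} (ha : 1 ≤ a) (hm : a + m ≤ l) (hl : l ≤ n - 1) :
    bDesc n a m * bDesc n 1 l = bDesc n 1 l * bDesc n (a+1) m := by
  induction m with
  | zero => simp [bDesc]
  | succ m ih =>
      have hs : σ n (a+m) * bDesc n 1 l = bDesc n 1 l * σ n (a+m+1) :=
        (shiftR (n := n) (l := l) (j := a+m) (by omega) (by omega) hl).symm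
      calc bDesc n a (m+1) * bDesc n 1 l
          = σ n (a+m) * (bDesc n a m * bDesc n 1 l) := by rw [bDesc_succ, mul_assoc]
        _ = (σ n (a+m) * bDesc n 1 l) * bDesc n (a+1) m := by
            rw [ih (by omega), mul_assoc]
        _ = bDesc n 1 l * (σ n (a+m+1) * bDesc n (a+1) m) := by rw [hs, mul_assoc]
        _ = bDesc n 1 l * bDesc n (a+1) (m+1) := by
            rw [bDesc_succ, show a+1+m = a+m+1 from by omega]

/-- `D_k^m = D_{k-1}^m ⬝ (σ_k ⋯ σ_{k-m+1})`. -/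
lemma dd_aux {n k : ℕ} (hk : k ≤ n - 1) :
    ∀ m, 1 ≤ m → m ≤ k → bAsc n 1 k ^ m = bAsc n 1 (k-1) ^ m * bDesc n (k-m+1) m := by
  intro m hm1
  induction m, hm1 using Nat.le_induction with
  | base =>
      intro hmk
      obtain ⟨kk, rfl⟩ : ∃ kk, k = kk + 1 := ⟨k - 1, by omega⟩
      simp only [pow_one, show kk+1-1 = kk from by omega, show kk+1-1+1 = kk+1 from by omega]
      rw [bAsc_succ, bDesc_succ, show (1:ℕ)+kk = kk+1 from by omega,
        show kk+1+0 = kk+1 from by omega]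
      simp [bDesc]
  | succ m hm ih =>
      intro hmk
      obtain ⟨mm, rfl⟩ : ∃ mm, m = mm + 1 := ⟨m - 1, by omega⟩
      obtain ⟨c, rfl⟩ : ∃ c, k = mm + c + 2 := ⟨k - mm - 2, by omega⟩
      have ihh := ih (by omega)
      rw [show mm + c + 2 - 1 = mm + c + 1 from by omega,
          show mm + c + 2 - (mm+1) + 1 = c + 2 from by omega] at ihh
      rw [show mm + c + 2 - 1 = mm + c + 1 from by omega,
          show mm + c + 2 - (mm+1+1) + 1 = c + 1 from by omega]
      have hA : bAsc n 1 (mm+c+2) = bAsc n 1 (mm+c+1) * σ n (mm+c+2) := by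
        rw [bAsc_succ, show (1:ℕ) + (mm+c+1) = mm+c+2 from by omega]
      have hB : bAsc n 1 (mm+c+1) = bAsc n 1 (mm+c) * σ n (mm+c+1) := by
        rw [bAsc_succ, show (1:ℕ) + (mm+c) = mm+c+1 from by omega]
      have hT : bDesc n (c+2) (mm+1) = σ n (mm+c+2) * bDesc n (c+2) mm := by
        rw [bDesc_succ, show c+2+mm = mm+c+2 from by omega]
      have h1 : bDesc n (c+2) mm * bAsc n 1 (mm+c+1)
          = bAsc n 1 (mm+c+1) * bDesc n (c+1) mm := by
        have h := move_desc_D (n := n) (l := mm+c+1) (a := c+2) (m := mm)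
          (by omega) (by omega) (by omega)
        rw [show c+2-1 = c+1 from by omega] at h
        exact h
      have h2 : σ n (mm+c+2) * bAsc n 1 (mm+c) = bAsc n 1 (mm+c) * σ n (mm+c+2) :=
        comm_asc le_rfl (by omega) (by omega)
      have h3 : σ n (mm+c+2) * bDesc n (c+1) mm = bDesc n (c+1) mm * σ n (mm+c+2) :=
        comm_desc (by omega) (by omega) (by omega)
      have h4 : σ n (mm+c+1) * σ n (mm+c+2) * σ n (mm+c+1)
          = σ n (mm+c+2) * σ n (mm+c+1) * σ n (mm+c+2) := by
        have h := sigma_braid (n := n) (j := mm+c+1) (by omega) (by omega)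
        rw [show mm+c+1+1 = mm+c+2 from by omega] at h
        exact h
      have h5 : σ n (mm+c+2) * bAsc n 1 (mm+c+1)
          = bAsc n 1 (mm+c) * (σ n (mm+c+2) * σ n (mm+c+1)) := by
        rw [hB, ← mul_assoc, h2, mul_assoc]
      calc bAsc n 1 (mm+c+2) ^ (mm+1+1)
          = bAsc n 1 (mm+c+2) ^ (mm+1) * bAsc n 1 (mm+c+2) := pow_succ _ _
        _ = (bAsc n 1 (mm+c+1) ^ (mm+1) * bDesc n (c+2) (mm+1)) * bAsc n 1 (mm+c+2) := by
            rw [ihh]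
        _ = (bAsc n 1 (mm+c+1) ^ (mm+1) * (σ n (mm+c+2) * bDesc n (c+2) mm)) *
              (bAsc n 1 (mm+c+1) * σ n (mm+c+2)) := by rw [hT, hA]
        _ = bAsc n 1 (mm+c+1) ^ (mm+1) *
              (σ n (mm+c+2) * ((bDesc n (c+2) mm * bAsc n 1 (mm+c+1)) * σ n (mm+c+2))) := by
            simp only [mul_assoc]
        _ = bAsc n 1 (mm+c+1) ^ (mm+1) *
              (σ n (mm+c+2) * ((bAsc n 1 (mm+c+1) * bDesc n (c+1) mm) * σ n (mm+c+2))) := by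
            rw [h1]
        _ = bAsc n 1 (mm+c+1) ^ (mm+1) *
              ((σ n (mm+c+2) * bAsc n 1 (mm+c+1)) * (bDesc n (c+1) mm * σ n (mm+c+2))) := by
            simp only [mul_assoc]
        _ = bAsc n 1 (mm+c+1) ^ (mm+1) *
              ((bAsc n 1 (mm+c) * (σ n (mm+c+2) * σ n (mm+c+1))) *
                (σ n (mm+c+2) * bDesc n (c+1) mm)) := by rw [h5, ← h3]
        _ = bAsc n 1 (mm+c+1) ^ (mm+1) *
              (bAsc n 1 (mm+c) * ((σ n (mm+c+2) * σ n (mm+c+1) * σ n (mm+c+2)) *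
                bDesc n (c+1) mm)) := by simp only [mul_assoc]
        _ = bAsc n 1 (mm+c+1) ^ (mm+1) *
              (bAsc n 1 (mm+c) * ((σ n (mm+c+1) * σ n (mm+c+2) * σ n (mm+c+1)) *
                bDesc n (c+1) mm)) := by rw [h4]
        _ = (bAsc n 1 (mm+c+1) ^ (mm+1) * (bAsc n 1 (mm+c) * σ n (mm+c+1))) *
              (σ n (mm+c+2) * (σ n (mm+c+1) * bDesc n (c+1) mm)) := by
            simp only [mul_assoc]
        _ = bAsc n 1 (mm+c+1) ^ (mm+1+1) *
              (σ n (mm+c+2) * (σ n (mm+c+1) * bDesc n (c+1) mm)) := by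
            rw [← hB, ← pow_succ]
        _ = bAsc n 1 (mm+c+1) ^ (mm+1+1) * bDesc n (c+1) (mm+1+1) := by
            rw [bDesc_succ, bDesc_succ, show c+1+(mm+1) = mm+c+2 from by omega,
              show c+1+mm = mm+c+1 from by omega]

/-- `R_k^m = (σ_{k-m+1} ⋯ σ_k) ⬝ R_{k-1}^m`. -/
lemma rr_aux {n k : ℕ} (hk : k ≤ n - 1) :
    ∀ m, 1 ≤ m → m ≤ k → bDesc n 1 k ^ m = bAsc n (k-m+1) m * bDesc n 1 (k-1) ^ m := by
  intro m hm1
  induction m, hm1 using Nat.le_induction with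
  | base =>
      intro hmk
      obtain ⟨kk, rfl⟩ : ∃ kk, k = kk + 1 := ⟨k - 1, by omega⟩
      simp only [pow_one, show kk+1-1 = kk from by omega, show kk+1-1+1 = kk+1 from by omega]
      rw [bDesc_succ, bAsc_succ, show (1:ℕ)+kk = kk+1 from by omega,
        show kk+1+0 = kk+1 from by omega]
      simp [bAsc]
  | succ m hm ih =>
      intro hmk
      obtain ⟨mm, rfl⟩ : ∃ mm, m = mm + 1 := ⟨m - 1, by omega⟩
      obtain ⟨c, rfl⟩ : ∃ c, k = mm + c + 2 := ⟨k - mm - 2, by omega⟩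
      have ihh := ih (by omega)
      rw [show mm + c + 2 - 1 = mm + c + 1 from by omega,
          show mm + c + 2 - (mm+1) + 1 = c + 2 from by omega] at ihh
      rw [show mm + c + 2 - 1 = mm + c + 1 from by omega,
          show mm + c + 2 - (mm+1+1) + 1 = c + 1 from by omega]
      have hR : bDesc n 1 (mm+c+2) = σ n (mm+c+2) * bDesc n 1 (mm+c+1) := by
        rw [bDesc_succ, show (1:ℕ) + (mm+c+1) = mm+c+2 from by omega]
      have hq : bDesc n 1 (mm+c+1) = σ n (mm+c+1) * bDesc n 1 (mm+c) := by
        rw [bDesc_succ, show (1:ℕ) + (mm+c) = mm+c+1 from by omega]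
      have hS : bAsc n (c+2) (mm+1) = bAsc n (c+2) mm * σ n (mm+c+2) := by
        rw [bAsc_succ, show c+2+mm = mm+c+2 from by omega]
      have h1 : bDesc n 1 (mm+c+1) * bAsc n (c+2) mm
          = bAsc n (c+1) mm * bDesc n 1 (mm+c+1) := by
        have h := move_asc_R (n := n) (l := mm+c+1) (a := c+2) (m := mm)
          (by omega) (by omega) (by omega)
        rw [show c+2-1 = c+1 from by omega] at h
        exact h
      have h2 : σ n (mm+c+2) * bAsc n (c+1) mm = bAsc n (c+1) mm * σ n (mm+c+2) :=
        comm_asc (by omega) (by omega) (by omega)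
      have h3 : σ n (mm+c+2) * bDesc n 1 (mm+c) = bDesc n 1 (mm+c) * σ n (mm+c+2) :=
        comm_desc le_rfl (by omega) (by omega)
      have h4 : σ n (mm+c+1) * σ n (mm+c+2) * σ n (mm+c+1)
          = σ n (mm+c+2) * σ n (mm+c+1) * σ n (mm+c+2) := by
        have h := sigma_braid (n := n) (j := mm+c+1) (by omega) (by omega)
        rw [show mm+c+1+1 = mm+c+2 from by omega] at h
        exact h
      have h6 : bDesc n 1 (mm+c+1) * σ n (mm+c+2)
          = (σ n (mm+c+1) * σ n (mm+c+2)) * bDesc n 1 (mm+c) := by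
        rw [hq, mul_assoc, ← h3, ← mul_assoc]
      calc bDesc n 1 (mm+c+2) ^ (mm+1+1)
          = bDesc n 1 (mm+c+2) * bDesc n 1 (mm+c+2) ^ (mm+1) := pow_succ' _ _
        _ = bDesc n 1 (mm+c+2) * (bAsc n (c+2) (mm+1) * bDesc n 1 (mm+c+1) ^ (mm+1)) := by
            rw [ihh]
        _ = (σ n (mm+c+2) * bDesc n 1 (mm+c+1)) *
              ((bAsc n (c+2) mm * σ n (mm+c+2)) * bDesc n 1 (mm+c+1) ^ (mm+1)) := by
            rw [hR, hS]
        _ = σ n (mm+c+2) * ((bDesc n 1 (mm+c+1) * bAsc n (c+2) mm) *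
              (σ n (mm+c+2) * bDesc n 1 (mm+c+1) ^ (mm+1))) := by
            simp only [mul_assoc]
        _ = σ n (mm+c+2) * ((bAsc n (c+1) mm * bDesc n 1 (mm+c+1)) *
              (σ n (mm+c+2) * bDesc n 1 (mm+c+1) ^ (mm+1))) := by rw [h1]
        _ = (σ n (mm+c+2) * bAsc n (c+1) mm) *
              ((bDesc n 1 (mm+c+1) * σ n (mm+c+2)) * bDesc n 1 (mm+c+1) ^ (mm+1)) := by
            simp only [mul_assoc]
        _ = (bAsc n (c+1) mm * σ n (mm+c+2)) *
              (((σ n (mm+c+1) * σ n (mm+c+2)) * bDesc n 1 (mm+c)) *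
                bDesc n 1 (mm+c+1) ^ (mm+1)) := by rw [h2, h6]
        _ = bAsc n (c+1) mm * ((σ n (mm+c+2) * σ n (mm+c+1) * σ n (mm+c+2)) *
              (bDesc n 1 (mm+c) * bDesc n 1 (mm+c+1) ^ (mm+1))) := by
            simp only [mul_assoc]
        _ = bAsc n (c+1) mm * ((σ n (mm+c+1) * σ n (mm+c+2) * σ n (mm+c+1)) *
              (bDesc n 1 (mm+c) * bDesc n 1 (mm+c+1) ^ (mm+1))) := by rw [h4]
        _ = ((bAsc n (c+1) mm * σ n (mm+c+1)) * σ n (mm+c+2)) *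
              ((σ n (mm+c+1) * bDesc n 1 (mm+c)) * bDesc n 1 (mm+c+1) ^ (mm+1)) := by
            simp only [mul_assoc]
        _ = ((bAsc n (c+1) mm * σ n (mm+c+1)) * σ n (mm+c+2)) *
              (bDesc n 1 (mm+c+1) * bDesc n 1 (mm+c+1) ^ (mm+1)) := by rw [← hq]
        _ = bAsc n (c+1) (mm+1+1) * bDesc n 1 (mm+c+1) ^ (mm+1+1) := by
            rw [← pow_succ', bAsc_succ, bAsc_succ, show c+1+(mm+1) = mm+c+2 from by omega,
              show c+1+mm = mm+c+1 from by omega]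

/-- `σ_1 D_k² = D_k² σ_k` for `k ≥ 2`. -/
lemma d2_lemma {n k : ℕ} (hk2 : 2 ≤ k) (hk : k ≤ n - 1) :
    σ n 1 * bAsc n 1 k ^ 2 = bAsc n 1 k ^ 2 * σ n k := by
  obtain ⟨kk, rfl⟩ : ∃ kk, k = kk + 2 := ⟨k - 2, by omega⟩
  have hA : bAsc n 1 (kk+2) = bAsc n 1 (kk+1) * σ n (kk+2) := by
    rw [bAsc_succ, show (1:ℕ) + (kk+1) = kk+2 from by omega]
  have h1 : bAsc n 1 (kk+2) * bAsc n 1 (kk+1) = bAsc n 2 (kk+1) * bAsc n 1 (kk+2) := by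
    have h := move_asc_D (n := n) (l := kk+2) (a := 1) (m := kk+1) le_rfl (by omega) hk
    rw [show (1:ℕ)+1 = 2 from rfl] at h
    exact h
  have h2 : bAsc n 1 (kk+2) = σ n 1 * bAsc n 2 (kk+1) := by
    rw [bAsc_succ_left]
    try norm_num
  have e2 : bAsc n 1 (kk+2) ^ 2 = bAsc n 1 (kk+2) * bAsc n 1 (kk+1) * σ n (kk+2) := by
    rw [pow_two]
    nth_rewrite 2 [hA]
    try rw [← mul_assoc]
  calc σ n 1 * bAsc n 1 (kk+2) ^ 2
      = σ n 1 * (bAsc n 1 (kk+2) * bAsc n 1 (kk+1)) * σ n (kk+2) := by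
        rw [e2]; simp only [mul_assoc]
    _ = (σ n 1 * bAsc n 2 (kk+1)) * (bAsc n 1 (kk+2) * σ n (kk+2)) := by
        rw [h1]; simp only [mul_assoc]
    _ = bAsc n 1 (kk+2) * (bAsc n 1 (kk+2) * σ n (kk+2)) := by rw [← h2]
    _ = bAsc n 1 (kk+2) ^ 2 * σ n (kk+2) := by rw [pow_two, mul_assoc]

lemma cent1 {n k : ℕ} (hk : k ≤ n - 1) :
    ∀ t j, t < j → j ≤ k → σ n j * bAsc n 1 k ^ t = bAsc n 1 k ^ t * σ n (j - t) := by
  intro t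
  induction t with
  | zero => intro j _ _; simp
  | succ t ih =>
      intro j h1 h2
      have hs : σ n j * bAsc n 1 k = bAsc n 1 k * σ n (j-1) := by
        have h := shiftD (n := n) (l := k) (j := j-1) (by omega) (by omega) hk
        rw [show j - 1 + 1 = j from by omega] at h
        exact h.symm
      rw [pow_succ', ← mul_assoc, hs, mul_assoc, ih (j-1) (by omega) (by omega),
        ← mul_assoc, ← pow_succ', show j - 1 - t = j - (t+1) from by omega]

/-- `D_k^{k+1}` is central in the subgroup generated by `σ_1, …, σ_k`. -/
lemma cent {n k : ℕ} (hk1 : 1 ≤ k) (hk : k ≤ n - 1) {j : ℕ} (hj1 : 1 ≤ j) (hjk : j ≤ k) :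
    σ n j * bAsc n 1 k ^ (k+1) = bAsc n 1 k ^ (k+1) * σ n j := by
  rcases eq_or_lt_of_le hk1 with h | hk2sw
  · have hj : j = 1 := by omega
    subst hj
    have hA : bAsc n 1 k = σ n 1 := by
      rw [← h]
      show bAsc n 1 (0+1) = σ n 1
      rw [bAsc_succ]
      simp [bAsc]
    rw [hA, ← pow_succ', ← pow_succ]
  · have hk2 : 2 ≤ k := hk2sw
    have e : bAsc n 1 k ^ (k+1)
        = bAsc n 1 k ^ (j-1) * bAsc n 1 k ^ 2 * bAsc n 1 k ^ (k-j) := by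
      rw [← pow_add, ← pow_add]
      congr 1
      omega
    rw [e]
    have c1 : σ n j * bAsc n 1 k ^ (j-1) = bAsc n 1 k ^ (j-1) * σ n 1 := by
      have h := cent1 (n := n) hk (j-1) j (by omega) hjk
      rw [show j - (j-1) = 1 from by omega] at h
      exact h
    have c2 : σ n k * bAsc n 1 k ^ (k-j) = bAsc n 1 k ^ (k-j) * σ n j := by
      have h := cent1 (n := n) hk (k-j) k (by omega) le_rfl
      rw [show k - (k-j) = j from by omega] at h
      exact h
    calc σ n j * (bAsc n 1 k ^ (j-1) * bAsc n 1 k ^ 2 * bAsc n 1 k ^ (k-j))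
        = (σ n j * bAsc n 1 k ^ (j-1)) * bAsc n 1 k ^ 2 * bAsc n 1 k ^ (k-j) := by
          simp only [mul_assoc]
      _ = bAsc n 1 k ^ (j-1) * (σ n 1 * bAsc n 1 k ^ 2) * bAsc n 1 k ^ (k-j) := by
          rw [c1]; simp only [mul_assoc]
      _ = bAsc n 1 k ^ (j-1) * (bAsc n 1 k ^ 2 * σ n k) * bAsc n 1 k ^ (k-j) := by
          rw [d2_lemma hk2 hk]
      _ = bAsc n 1 k ^ (j-1) * bAsc n 1 k ^ 2 * (σ n k * bAsc n 1 k ^ (k-j)) := by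
          simp only [mul_assoc]
      _ = bAsc n 1 k ^ (j-1) * bAsc n 1 k ^ 2 * (bAsc n 1 k ^ (k-j) * σ n j) := by
          rw [c2]
      _ = bAsc n 1 k ^ (j-1) * bAsc n 1 k ^ 2 * bAsc n 1 k ^ (k-j) * σ n j := by
          simp only [mul_assoc]

lemma asc_commute {n : ℕ} {x : BraidGroup n} (a l : ℕ)
    (h : ∀ j, a ≤ j → j < a + l → Commute (σ n j) x) : Commute (bAsc n a l) x := by
  induction l with
  | zero => simpa [bAsc] using Commute.one_left x
  | succ l ih =>
      rw [bAsc_succ]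
      exact Commute.mul_left (ih (fun j h1 h2 => h j h1 (by omega)))
        (h (a+l) (by omega) (by omega))

/-- Main: `D_k^{k+1} = R_k^{k+1}`. -/
lemma theta_eq {n : ℕ} : ∀ k, 1 ≤ k → k ≤ n - 1 →
    bAsc n 1 k ^ (k+1) = bDesc n 1 k ^ (k+1) := by
  intro k hk1
  induction k, hk1 using Nat.le_induction with
  | base =>
      intro _
      have h : bAsc n 1 1 = bDesc n 1 1 := by simp [bAsc, bDesc]
      rw [h]
  | succ k hk ih =>
      intro hkn
      have ihh := ih (by omega)
      have hdd := dd_aux (n := n) (k := k+1) hkn (k+1) (by omega) le_rfl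
      rw [show k + 1 - (k+1) + 1 = 1 from by omega, show k + 1 - 1 = k from by omega] at hdd
      have hrr := rr_aux (n := n) (k := k+1) hkn (k+1) (by omega) le_rfl
      rw [show k + 1 - (k+1) + 1 = 1 from by omega, show k + 1 - 1 = k from by omega] at hrr
      have hD : bAsc n 1 (k+1) ^ (k+1+1)
          = bAsc n 1 k ^ (k+1) * (bDesc n 1 (k+1) * bAsc n 1 (k+1)) := by
        rw [pow_succ, hdd, mul_assoc]
      have hR : bDesc n 1 (k+1) ^ (k+1+1)
          = (bDesc n 1 (k+1) * bAsc n 1 (k+1)) * bDesc n 1 k ^ (k+1) := by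
        rw [pow_succ', hrr, ← mul_assoc]
      have hτ : bDesc n 1 (k+1) * bAsc n 1 (k+1)
          = (bAsc n 1 k ^ (k+1))⁻¹ * bAsc n 1 (k+1) ^ (k+1+1) := by
        rw [hD, ← mul_assoc, inv_mul_cancel, one_mul]
      have hcomm : Commute (bAsc n 1 k ^ (k+1)) (bDesc n 1 (k+1) * bAsc n 1 (k+1)) := by
        have hgen : ∀ j, 1 ≤ j → j ≤ k →
            Commute (σ n j) (bDesc n 1 (k+1) * bAsc n 1 (k+1)) := by
          intro j h1 h2
          rw [hτ]
          have cB : Commute (σ n j) (bAsc n 1 k ^ (k+1)) := cent (by omega) (by omega) h1 h2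
          have cA : Commute (σ n j) (bAsc n 1 (k+1) ^ (k+1+1)) :=
            cent (n := n) (k := k+1) (by omega) hkn h1 (by omega)
          exact Commute.mul_right cB.inv_right cA
        have hB : Commute (bAsc n 1 k) (bDesc n 1 (k+1) * bAsc n 1 (k+1)) :=
          asc_commute 1 k (fun j h1 h2 => hgen j h1 (by omega))
        exact hB.pow_left (k+1)
      rw [hD, hcomm.eq, hR, ihh]

/-- `(ρ σ_1)^m = ρ^m (σ_m ⋯ σ_1)`. -/
lemma k2_aux {n : ℕ} (hn : 3 ≤ n) :
    ∀ m, m ≤ n - 1 →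
      (bDesc n 1 (n-1) * σ n 1) ^ m = bDesc n 1 (n-1) ^ m * bDesc n 1 m := by
  intro m
  induction m with
  | zero => intro _; simp [bDesc]
  | succ m ih =>
      intro hm
      calc (bDesc n 1 (n-1) * σ n 1) ^ (m+1)
          = (bDesc n 1 (n-1) * σ n 1) ^ m * (bDesc n 1 (n-1) * σ n 1) := pow_succ _ _
        _ = bDesc n 1 (n-1) ^ m * ((bDesc n 1 m * bDesc n 1 (n-1)) * σ n 1) := by
            rw [ih (by omega)]; simp only [mul_assoc]
        _ = bDesc n 1 (n-1) ^ m * ((bDesc n 1 (n-1) * bDesc n (1+1) m) * σ n 1) := by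
            rw [move_desc_R (n := n) (l := n-1) (a := 1) (m := m) le_rfl (by omega) le_rfl]
        _ = (bDesc n 1 (n-1) ^ m * bDesc n 1 (n-1)) * (bDesc n (1+1) m * σ n 1) := by
            simp only [mul_assoc]
        _ = bDesc n 1 (n-1) ^ (m+1) * bDesc n 1 (m+1) := by
            rw [← pow_succ, ← bDesc_succ_right]

/-- `ρ^{i-1} σ_i = σ_1 ρ^{i-1}`. -/
lemma k1_aux {n : ℕ} (hn : 3 ≤ n) :
    ∀ i, 1 ≤ i → i ≤ n - 1 →
      bDesc n 1 (n-1) ^ (i-1) * σ n i = σ n 1 * bDesc n 1 (n-1) ^ (i-1) := by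
  intro i hi1
  induction i, hi1 using Nat.le_induction with
  | base => intro _; simp
  | succ i hi ih =>
      intro hin
      have e : bDesc n 1 (n-1) ^ (i+1-1) = bDesc n 1 (n-1) ^ (i-1) * bDesc n 1 (n-1) := by
        rw [← pow_succ]
        congr 1
        omega
      rw [e, mul_assoc, shiftR (n := n) (l := n-1) (j := i) (by omega) (by omega) le_rfl,
        ← mul_assoc, ih (by omega), mul_assoc]

lemma list_asc (n : ℕ) : ∀ m, ((List.range m).map (fun k => σ n (k + 1))).prod = bAsc n 1 m := by
  intro m
  induction m with
  | zero => simp [bAsc]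
  | succ m ih =>
      rw [List.range_succ, List.map_append, List.prod_append, ih, bAsc_succ]
      simp [Nat.add_comm]

lemma list_desc (n : ℕ) :
    ∀ m, (((List.range m).map (fun k => σ n (k + 1))).reverse).prod = bDesc n 1 m := by
  intro m
  induction m with
  | zero => simp [bDesc]
  | succ m ih =>
      rw [List.range_succ, List.map_append, List.reverse_append, bDesc_succ]
      simp only [List.reverse_cons, List.reverse_nil, List.nil_append, List.map_cons,
        List.map_nil, List.prod_cons, List.prod_nil, mul_one, List.singleton_append]
      rw [ih]
      congr 1
      simp [Nat.add_comm]

lemma braidδ_eq (n : ℕ) : braidδ n = bAsc n 1 (n-1) := list_asc n (n-1)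

lemma braidρ_eq (n : ℕ) : braidρ n = bDesc n 1 (n-1) := list_desc n (n-1)

lemma swap_pow {G : Type*} [Group G] (a b : G) (m : ℕ) :
    a * (b * a) ^ m = (a * b) ^ m * a := by
  induction m with
  | zero => simp
  | succ m ih =>
      rw [pow_succ, ← mul_assoc, ih, pow_succ]
      simp only [mul_assoc]

end Aux

/-- in `B_n`, for `1 ≤ i ≤ n-1`,
`σ_i⁻¹ = θ⁻¹ ρ^{2-i} (σ_1 ρ)^{n-2} ρ^{i-1}`. -/
theorem sigma_inv_formula (n : ℕ) (hn : 3 ≤ n) (i : ℕ) (h1 : 1 ≤ i) (h2 : i ≤ n - 1) :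
    (σ n i)⁻¹ =
      (braidθ n)⁻¹ * braidρ n ^ (2 - (i : ℤ)) * (σ n 1 * braidρ n) ^ (n - 2) *
        braidρ n ^ ((i : ℤ) - 1) := by
  have hρ : braidρ n = bDesc n 1 (n-1) := braidρ_eq n
  -- θ = ρ^n
  have hθ : braidθ n = bDesc n 1 (n-1) ^ n := by
    unfold braidθ
    rw [braidδ_eq]
    have h := theta_eq (n := n) (n-1) (by omega) le_rfl
    rw [show n - 1 + 1 = n from by omega] at h
    rw [h]
  -- (ρ σ_1)^(n-1) = ρ^n
  have hK2 : (bDesc n 1 (n-1) * σ n 1) ^ (n-1) = bDesc n 1 (n-1) ^ n := by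
    have h := k2_aux (n := n) hn (n-1) le_rfl
    rw [h, ← pow_succ, show n - 1 + 1 = n from by omega]
  -- (σ_1 ρ)^(n-2) = ρ⁻¹ ρ^n σ_1⁻¹
  have h2' : (σ n 1 * bDesc n 1 (n-1)) ^ (n-2)
      = (bDesc n 1 (n-1))⁻¹ * bDesc n 1 (n-1) ^ n * (σ n 1)⁻¹ := by
    have hstep : bDesc n 1 (n-1) * ((σ n 1 * bDesc n 1 (n-1)) ^ (n-2) * σ n 1)
        = bDesc n 1 (n-1) ^ n := by
      rw [show (σ n 1 * bDesc n 1 (n-1)) ^ (n-2) * σ n 1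
            = σ n 1 * (bDesc n 1 (n-1) * σ n 1) ^ (n-2)
          from (swap_pow (σ n 1) (bDesc n 1 (n-1)) (n-2)).symm,
        ← mul_assoc, ← pow_succ', show n - 2 + 1 = n - 1 from by omega, hK2]
    rw [← hstep]
    group
  -- σ_i = ρ^{-(i-1)} σ_1 ρ^{i-1}
  have hK1 : σ n i = (bDesc n 1 (n-1) ^ (i-1))⁻¹ * σ n 1 * bDesc n 1 (n-1) ^ (i-1) := by
    have h := k1_aux (n := n) hn i h1 h2
    rw [mul_assoc, ← h, ← mul_assoc, inv_mul_cancel, one_mul]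
  -- zpow rewrites
  have hz1 : braidρ n ^ ((i : ℤ) - 1) = bDesc n 1 (n-1) ^ (i-1) := by
    rw [hρ, show (i : ℤ) - 1 = ((i - 1 : ℕ) : ℤ) from by omega, zpow_natCast]
  have hz2 : braidρ n ^ (2 - (i : ℤ)) = bDesc n 1 (n-1) * (bDesc n 1 (n-1) ^ (i-1))⁻¹ := by
    rw [hρ, show (2 - (i : ℤ)) = 1 - ((i - 1 : ℕ) : ℤ) from by omega, zpow_sub,
      zpow_one, zpow_natCast]
  rw [hz1, hz2, hθ, hρ, hK1, h2']
  group
end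

section
/- Every element of the braid group B_n is conjugate to a braid of the form θ^μ β(I), where μ is an integer, I = (i_1,…,i_d) is a finite nonempty sequence of positive integers, and β(I) = σ_1^{i_1}ρ σ_1^{i_2}ρ ⋯ σ_1^{i_d}ρ. -/
/-- `β(I) = σ_1^{i_1} ρ σ_1^{i_2} ρ ⋯ σ_1^{i_d} ρ` for a sequence `I` of positive integers. -/
noncomputable def braidβ (n : ℕ) (I : List ℕ) : BraidGroup n :=
  (I.map (fun i => σ n 1 ^ i * braidρ n)).prod

namespace BraidNF

variable {n : ℕ}

/-- Elements of the relation set map to `1`. -/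
lemma rel_one {r : FreeGroup (Fin (n - 1))} (h : r ∈ braidRels n) :
    PresentedGroup.mk (braidRels n) r = 1 := by
  have hm : r ∈ Subgroup.normalClosure (braidRels n) := Subgroup.subset_normalClosure h
  exact (QuotientGroup.eq_one_iff r).mpr hm

lemma sigma_def {a : ℕ} (ha : 1 ≤ a) (hb : a ≤ n - 1) :
    σ n a = PresentedGroup.of (⟨a - 1, by omega⟩ : Fin (n - 1)) :=
  dif_pos ⟨ha, hb⟩

lemma of_eq_sigma (x : Fin (n - 1)) :
    (PresentedGroup.of x : BraidGroup n) = σ n ((x : ℕ) + 1) := by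
  have hx := x.isLt
  rw [sigma_def (by omega) (by omega)]
  congr 1

/-- Far commutation relation. -/
lemma braid_comm {a b : ℕ} (ha : 1 ≤ a) (hab : a + 2 ≤ b) (hb : b ≤ n - 1) :
    σ n a * σ n b = σ n b * σ n a := by
  have hi : a - 1 < n - 1 := by omega
  have hj : b - 1 < n - 1 := by omega
  have hr : (FreeGroup.of (⟨a - 1, hi⟩ : Fin (n - 1)) * FreeGroup.of (⟨b - 1, hj⟩ : Fin (n - 1)) *
      (FreeGroup.of (⟨a - 1, hi⟩ : Fin (n - 1)))⁻¹ *
      (FreeGroup.of (⟨b - 1, hj⟩ : Fin (n - 1)))⁻¹) ∈ braidRels n := by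
    left
    exact ⟨⟨a - 1, hi⟩, ⟨b - 1, hj⟩, by simp; omega, rfl⟩
  have h1 := rel_one hr
  rw [map_mul, map_mul, map_mul, map_inv, map_inv] at h1
  have h2 : (PresentedGroup.of (⟨a - 1, hi⟩ : Fin (n - 1)) : BraidGroup n) *
      PresentedGroup.of (⟨b - 1, hj⟩ : Fin (n - 1)) *
      (PresentedGroup.of (⟨a - 1, hi⟩ : Fin (n - 1)))⁻¹ *
      (PresentedGroup.of (⟨b - 1, hj⟩ : Fin (n - 1)))⁻¹ = 1 := h1
  have h3 := mul_inv_eq_one.mp h2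
  have h4 : σ n a * σ n b * (σ n a)⁻¹ = σ n b := by
    rw [sigma_def ha (by omega), sigma_def (by omega : (1:ℕ) ≤ b) hb]; exact h3
  calc σ n a * σ n b = (σ n a * σ n b * (σ n a)⁻¹) * σ n a := by group
    _ = σ n b * σ n a := by rw [h4]

/-- Braid relation. -/
lemma braid_move {a : ℕ} (ha : 1 ≤ a) (hb : a + 1 ≤ n - 1) :
    σ n a * σ n (a + 1) * σ n a = σ n (a + 1) * σ n a * σ n (a + 1) := by
  have hi : a - 1 < n - 1 := by omega
  have hj : a < n - 1 := by omega
  have hr : ((FreeGroup.of (⟨a - 1, hi⟩ : Fin (n - 1)) * FreeGroup.of (⟨a, hj⟩ : Fin (n - 1)) *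
      FreeGroup.of (⟨a - 1, hi⟩ : Fin (n - 1))) *
      (FreeGroup.of (⟨a, hj⟩ : Fin (n - 1)) * FreeGroup.of (⟨a - 1, hi⟩ : Fin (n - 1)) *
      FreeGroup.of (⟨a, hj⟩ : Fin (n - 1)))⁻¹) ∈ braidRels n := by
    right
    exact ⟨⟨a - 1, hi⟩, ⟨a, hj⟩, by simp; omega, rfl⟩
  have h1 := rel_one hr
  rw [map_mul, map_inv] at h1
  rw [sigma_def ha (by omega), sigma_def (by omega : (1:ℕ) ≤ a + 1) hb]
  have h2 := mul_inv_eq_one.mp h1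
  have ha1 : a + 1 - 1 = a := by omega
  rw [map_mul, map_mul, map_mul, map_mul] at h2
  simp only [ha1]
  exact h2


lemma braid_move' {a : ℕ} (ha : 1 ≤ a) (hb : a + 1 ≤ n - 1) (X : BraidGroup n) :
    σ n a * (σ n (a + 1) * (σ n a * X)) = σ n (a + 1) * (σ n a * (σ n (a + 1) * X)) := by
  rw [← mul_assoc, ← mul_assoc, ← mul_assoc, ← mul_assoc, braid_move ha hb]

end BraidNF

/-- Descending product `desc n a b = σ_a σ_{a-1} ⋯ σ_b` (`1` if `a < b`). -/
noncomputable def desc (n : ℕ) : ℕ → ℕ → BraidGroup n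
  | 0, _ => 1
  | (a + 1), b => if b ≤ a + 1 then σ n (a + 1) * desc n a b else 1

/-- Ascending product `asc n a b = σ_a σ_{a+1} ⋯ σ_b` (`1` if `b < a`). -/
noncomputable def asc (n : ℕ) (a : ℕ) : ℕ → BraidGroup n
  | 0 => 1
  | (b + 1) => if a ≤ b + 1 then asc n a b * σ n (b + 1) else 1

namespace BraidNF

lemma desc_zero {b : ℕ} : desc n 0 b = 1 := rfl

lemma desc_succ {a b : ℕ} (h : b ≤ a + 1) :
    desc n (a + 1) b = σ n (a + 1) * desc n a b := by
  rw [desc, if_pos h]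

lemma desc_of_lt {a b : ℕ} (h : a < b) : desc n a b = 1 := by
  cases a with
  | zero => rfl
  | succ a => rw [desc, if_neg (by omega)]

lemma asc_zero {a : ℕ} : asc n a 0 = 1 := rfl

lemma asc_succ {a b : ℕ} (h : a ≤ b + 1) :
    asc n a (b + 1) = asc n a b * σ n (b + 1) := by
  rw [asc, if_pos h]

lemma asc_of_lt {a b : ℕ} (h : b < a) : asc n a b = 1 := by
  cases b with
  | zero => rfl
  | succ b => rw [asc, if_neg (by omega)]

/-- `σ_j` commutes with `desc n a b` when `j ≥ a + 2`. -/
lemma comm_desc_right {j a b : ℕ} (hj : 1 ≤ b) (hjn : j ≤ n - 1) (hja : a + 2 ≤ j) :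
    σ n j * desc n a b = desc n a b * σ n j := by
  induction a with
  | zero => rw [desc_zero, one_mul, mul_one]
  | succ a ih =>
    by_cases h : b ≤ a + 1
    · rw [desc_succ h, ← mul_assoc, ← braid_comm (by omega) (by omega) hjn, mul_assoc,
        ih (by omega), mul_assoc]
    · rw [desc_of_lt (by omega), one_mul, mul_one]

/-- `σ_j` commutes with `desc n a b` when `j + 2 ≤ b`. -/
lemma comm_desc_left {j a b : ℕ} (hj : 1 ≤ j) (han : a ≤ n - 1) (hjb : j + 2 ≤ b) :
    σ n j * desc n a b = desc n a b * σ n j := by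
  induction a with
  | zero => rw [desc_zero, one_mul, mul_one]
  | succ a ih =>
    by_cases h : b ≤ a + 1
    · rw [desc_succ h, ← mul_assoc, braid_comm hj (by omega) (by omega), mul_assoc,
        ih (by omega), mul_assoc]
    · rw [desc_of_lt (by omega), one_mul, mul_one]

/-- `σ_j` commutes with `asc n a b` when `j ≥ b + 2`. -/
lemma comm_asc_right {j a b : ℕ} (ha : 1 ≤ a) (hjn : j ≤ n - 1) (hjb : b + 2 ≤ j) :
    σ n j * asc n a b = asc n a b * σ n j := by
  induction b with
  | zero => rw [asc_zero, one_mul, mul_one]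
  | succ b ih =>
    by_cases h : a ≤ b + 1
    · rw [asc_succ h, ← mul_assoc, ih (by omega), mul_assoc,
        ← braid_comm (by omega) (by omega) hjn, mul_assoc]
    · rw [asc_of_lt (by omega), one_mul, mul_one]

/-- Right-peel for `desc`: `σ_a ⋯ σ_b = (σ_a ⋯ σ_{b+1}) σ_b`. -/
lemma desc_peel {a b : ℕ} (hb : 1 ≤ b) (hba : b ≤ a) :
    desc n a b = desc n a (b + 1) * σ n b := by
  induction a with
  | zero => omega
  | succ a ih =>
    by_cases h : b ≤ a
    · rw [desc_succ (by omega), desc_succ (by omega), ih h, mul_assoc]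
    · have hba' : b = a + 1 := by omega
      subst hba'
      rw [desc_succ le_rfl, desc_of_lt (by omega), mul_one,
        desc_of_lt (by omega), one_mul]

/-- Left-peel for `asc`: `σ_a ⋯ σ_b = σ_a (σ_{a+1} ⋯ σ_b)`. -/
lemma asc_peel {a b : ℕ} (ha : 1 ≤ a) (hab : a ≤ b) :
    asc n a b = σ n a * asc n (a + 1) b := by
  induction b with
  | zero => omega
  | succ b ih =>
    by_cases h : a ≤ b
    · rw [asc_succ (by omega), asc_succ (by omega), ih h, mul_assoc]
    · have : a = b + 1 := by omega
      subst this
      rw [asc_succ le_rfl, asc_of_lt (by omega), asc_of_lt (by omega), one_mul, mul_one]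

/-- Shift lemma for descending blocks: `σ_i (σ_a ⋯ σ_b) = (σ_a ⋯ σ_b) σ_{i+1}`
for `b ≤ i ≤ a - 1`. -/
lemma shift_desc {i a b : ℕ} (hb : 1 ≤ b) (hbi : b ≤ i) (hia : i + 1 ≤ a) (han : a ≤ n - 1) :
    σ n i * desc n a b = desc n a b * σ n (i + 1) := by
  induction a with
  | zero => omega
  | succ a ih =>
    by_cases h : i + 1 ≤ a
    · rw [desc_succ (by omega), ← mul_assoc, braid_comm (by omega) (by omega) han,
        mul_assoc, ih (by omega) (by omega), mul_assoc]
    · have hia' : i = a := by omega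
      subst hia'
      have hkey : desc n i b = σ n i * desc n (i - 1) b := by
        cases i with
        | zero => omega
        | succ i0 => rw [desc_succ (by omega), Nat.add_sub_cancel]
      rw [desc_succ (by omega), hkey]
      simp only [mul_assoc]
      rw [braid_move' (by omega) (by omega), comm_desc_right hb han (by omega)]

/-- Shift lemma for ascending blocks: `(σ_a ⋯ σ_b) σ_i = σ_{i+1} (σ_a ⋯ σ_b)`
for `a ≤ i ≤ b - 1`. -/
lemma shift_asc {i a b : ℕ} (ha : 1 ≤ a) (hai : a ≤ i) (hib : i + 1 ≤ b) (hbn : b ≤ n - 1) :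
    asc n a b * σ n i = σ n (i + 1) * asc n a b := by
  induction b with
  | zero => omega
  | succ b ih =>
    by_cases h : i + 1 ≤ b
    · rw [asc_succ (by omega), mul_assoc, ← braid_comm (by omega) (by omega) hbn,
        ← mul_assoc, ih (by omega) (by omega), mul_assoc]
    · have hib' : i = b := by omega
      subst hib'
      have hkey : asc n a i = asc n a (i - 1) * σ n i := by
        cases i with
        | zero => omega
        | succ i0 => rw [asc_succ (by omega), Nat.add_sub_cancel]
      rw [asc_succ (by omega), hkey]
      have hcomm : ∀ X : BraidGroup n, σ n (i + 1) * (asc n a (i - 1) * X) =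
          asc n a (i - 1) * (σ n (i + 1) * X) := by
        intro X
        rw [← mul_assoc, comm_asc_right ha (by omega) (by omega), mul_assoc]
      have hmove := braid_move (show 1 ≤ i by omega) (show i + 1 ≤ n - 1 by omega)
      simp only [mul_assoc] at hmove ⊢
      rw [hcomm, hmove]
/-! ### Identification of `braidρ`, `braidδ` with `desc`, `asc` -/

lemma prod_range_asc (m : ℕ) :
    ((List.range m).map (fun k => σ n (k + 1))).prod = asc n 1 m := by
  induction m with
  | zero => rfl
  | succ m ih =>
    rw [List.range_succ, List.map_append, List.prod_append, ih, List.map_singleton,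
      List.prod_singleton, asc_succ (by omega)]

lemma prod_range_desc (m : ℕ) :
    (((List.range m).map (fun k => σ n (k + 1))).reverse).prod = desc n m 1 := by
  induction m with
  | zero => rfl
  | succ m ih =>
    rw [List.range_succ, List.map_append, List.reverse_append, List.map_singleton,
      List.reverse_singleton, List.singleton_append, List.prod_cons, ih,
      desc_succ (by omega)]

lemma rho_eq : braidρ n = desc n (n - 1) 1 := prod_range_desc (n - 1)

lemma delta_eq : braidδ n = asc n 1 (n - 1) := prod_range_asc (n - 1)

/-! ### The full twist is central -/

lemma delta_shift {i : ℕ} (hn : 3 ≤ n) (hi : 1 ≤ i) (hin : i ≤ n - 2) :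
    braidδ n * σ n i = σ n (i + 1) * braidδ n := by
  rw [delta_eq]
  exact shift_asc (by omega) hi (by omega) (by omega)

lemma delta_asc {k : ℕ} (hn : 3 ≤ n) (hk : k ≤ n - 2) :
    braidδ n * asc n 1 k = asc n 2 (k + 1) * braidδ n := by
  induction k with
  | zero => rw [asc_zero, asc_of_lt (by omega), mul_one, one_mul]
  | succ k ih =>
    rw [asc_succ (by omega), ← mul_assoc, ih (by omega), mul_assoc,
      delta_shift hn (by omega) (by omega), ← mul_assoc, ← asc_succ (by omega)]

lemma asc_succ' {a b : ℕ} (hb : 1 ≤ b) (hab : a ≤ b) :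
    asc n a b = asc n a (b - 1) * σ n b := by
  cases b with
  | zero => omega
  | succ b0 => rw [asc_succ hab, Nat.add_sub_cancel]

lemma delta_sq (hn : 3 ≤ n) :
    σ n 1 * braidδ n ^ 2 = braidδ n ^ 2 * σ n (n - 1) := by
  have e1 : braidδ n = asc n 1 (n - 1 - 1) * σ n (n - 1) := by
    rw [delta_eq, asc_succ' (by omega) (by omega)]
  have e2 : n - 1 - 1 + 1 = n - 1 := by omega
  have h2 : braidδ n ^ 2 = asc n 2 (n - 1) * (braidδ n * σ n (n - 1)) := by
    calc braidδ n ^ 2 = braidδ n * braidδ n := sq (braidδ n)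
      _ = braidδ n * (asc n 1 (n - 1 - 1) * σ n (n - 1)) := by rw [← e1]
      _ = (braidδ n * asc n 1 (n - 1 - 1)) * σ n (n - 1) := by rw [mul_assoc]
      _ = (asc n 2 (n - 1 - 1 + 1) * braidδ n) * σ n (n - 1) := by
          rw [delta_asc hn (by omega)]
      _ = (asc n 2 (n - 1) * braidδ n) * σ n (n - 1) := by rw [e2]
      _ = asc n 2 (n - 1) * (braidδ n * σ n (n - 1)) := by rw [mul_assoc]
  calc σ n 1 * braidδ n ^ 2
      = σ n 1 * (asc n 2 (n - 1) * (braidδ n * σ n (n - 1))) := by rw [h2]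
    _ = (σ n 1 * asc n 2 (n - 1)) * (braidδ n * σ n (n - 1)) := by rw [mul_assoc]
    _ = asc n 1 (n - 1) * (braidδ n * σ n (n - 1)) := by
        rw [← asc_peel (by omega) (by omega)]
    _ = braidδ n * (braidδ n * σ n (n - 1)) := by rw [← delta_eq]
    _ = braidδ n ^ 2 * σ n (n - 1) := by rw [sq, mul_assoc]

lemma sigma_delta_pow {j k : ℕ} (hn : 3 ≤ n) (hk : k + 1 ≤ j) (hj : j ≤ n - 1) :
    σ n j * braidδ n ^ k = braidδ n ^ k * σ n (j - k) := by
  induction k with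
  | zero => simp
  | succ k ih =>
    have h1 : σ n (j - k) * braidδ n = braidδ n * σ n (j - k - 1) := by
      have h := delta_shift hn (show 1 ≤ j - k - 1 by omega) (show j - k - 1 ≤ n - 2 by omega)
      have he : j - k - 1 + 1 = j - k := by omega
      rw [he] at h
      exact h.symm
    calc σ n j * braidδ n ^ (k + 1) = (σ n j * braidδ n ^ k) * braidδ n := by
          rw [pow_succ, mul_assoc]
      _ = braidδ n ^ k * (σ n (j - k) * braidδ n) := by rw [ih (by omega), mul_assoc]
      _ = braidδ n ^ k * (braidδ n * σ n (j - k - 1)) := by rw [h1]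
      _ = braidδ n ^ (k + 1) * σ n (j - (k + 1)) := by
          rw [← mul_assoc, ← pow_succ]
          have : j - k - 1 = j - (k + 1) := by omega
          rw [this]

lemma central_gen {i : ℕ} (hn : 3 ≤ n) (hi : 1 ≤ i) (hin : i ≤ n - 1) :
    σ n i * braidθ n = braidθ n * σ n i := by
  unfold braidθ
  have hsplit : braidδ n ^ n = braidδ n ^ (i - 1) * (braidδ n ^ 2 * braidδ n ^ (n - i - 1)) := by
    rw [← pow_add, ← pow_add]
    congr 1
    omega
  have hA : ∀ X : BraidGroup n, σ n i * (braidδ n ^ (i - 1) * X) =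
      braidδ n ^ (i - 1) * (σ n 1 * X) := by
    intro X
    have h := sigma_delta_pow (j := i) (k := i - 1) hn (by omega) hin
    have he : i - (i - 1) = 1 := by omega
    rw [he] at h
    rw [← mul_assoc, h, mul_assoc]
  have hB : ∀ X : BraidGroup n, σ n 1 * (braidδ n ^ 2 * X) =
      braidδ n ^ 2 * (σ n (n - 1) * X) := by
    intro X
    rw [← mul_assoc, delta_sq hn, mul_assoc]
  have hC : σ n (n - 1) * braidδ n ^ (n - i - 1) = braidδ n ^ (n - i - 1) * σ n i := by
    have h := sigma_delta_pow (j := n - 1) (k := n - i - 1) hn (by omega) (by omega)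
    have he : n - 1 - (n - i - 1) = i := by omega
    rw [he] at h
    exact h
  rw [hsplit, hA, hB, hC]
  simp only [mul_assoc]

lemma theta_commute (hn : 3 ≤ n) (g : BraidGroup n) : Commute (braidθ n) g := by
  refine PresentedGroup.induction_on g (fun z => ?_)
  induction z using FreeGroup.induction_on with
  | C1 => simp [Commute, SemiconjBy]
  | of x =>
    have h : (PresentedGroup.mk (braidRels n)) (FreeGroup.of x) =
        (PresentedGroup.of x : BraidGroup n) := rfl
    rw [h, of_eq_sigma x]
    have hx := x.isLt
    exact (central_gen hn (by omega) (by omega)).symm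
  | inv_of x ih => exact ih.inv_right
  | mul x y ihx ihy =>
    rw [map_mul]
    exact ihx.mul_right ihy

lemma theta_zpow_commute (hn : 3 ≤ n) (μ : ℤ) (g : BraidGroup n) :
    Commute (braidθ n ^ μ) g :=
  (theta_commute hn g).zpow_left μ

/-! ### `ρ` is conjugate to `δ`, so `ρ^n = θ` -/

/-- `asc n 1 k` commutes with `desc n a b` when `k + 2 ≤ b`. -/
lemma block_comm {k a b : ℕ} (han : a ≤ n - 1) (hkb : k + 2 ≤ b) :
    asc n 1 k * desc n a b = desc n a b * asc n 1 k := by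
  induction k with
  | zero => rw [asc_zero, one_mul, mul_one]
  | succ k ih =>
    rw [asc_succ (by omega), mul_assoc, comm_desc_left (by omega) han (by omega),
      ← mul_assoc, ih (by omega), mul_assoc]

lemma conj_chain (hn : 3 ≤ n) {k : ℕ} (hk : k ≤ n - 1) :
    IsConj (braidρ n) (asc n 1 k * desc n (n - 1) (k + 1)) := by
  induction k with
  | zero =>
    rw [asc_zero, one_mul, ← rho_eq]
  | succ k ih =>
    refine (ih (by omega)).trans ?_
    have h1 : asc n 1 k * desc n (n - 1) (k + 1) =
        desc n (n - 1) (k + 2) * asc n 1 (k + 1) := by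
      rw [desc_peel (by omega) (by omega), ← mul_assoc, block_comm (by omega) (by omega),
        mul_assoc, ← asc_succ (by omega)]
    rw [h1]
    exact isConj_iff.mpr ⟨asc n 1 (k + 1), by group⟩

lemma rho_conj_delta (hn : 3 ≤ n) : IsConj (braidρ n) (braidδ n) := by
  have h := conj_chain hn (k := n - 1) le_rfl
  rwa [desc_of_lt (by omega), mul_one, ← delta_eq] at h

lemma rho_pow_n (hn : 3 ≤ n) : braidρ n ^ n = braidθ n := by
  obtain ⟨c, hc⟩ := isConj_iff.mp (rho_conj_delta hn)
  have h3 : braidθ n = c * braidρ n ^ n * c⁻¹ := by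
    rw [braidθ, ← hc, conj_pow]
  calc braidρ n ^ n = c⁻¹ * (c * braidρ n ^ n * c⁻¹) * c := by group
    _ = c⁻¹ * braidθ n * c := by rw [← h3]
    _ = braidθ n := by
        rw [mul_assoc, (theta_commute hn c).eq]
        group

/-! ### The key identity `ρ^{n-1} = (σ_1 ρ)^{n-2} σ_1` -/

lemma rho_desc (hn : 3 ≤ n) {k : ℕ} (h1 : 1 ≤ k) (h2 : k ≤ n - 1) :
    braidρ n * desc n k 1 = desc n (k - 1) 1 * (braidρ n * σ n 1) := by
  induction k with
  | zero => omega
  | succ k ih =>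
    by_cases hk : 1 ≤ k
    · -- step : use ρ σ_{k+1} = σ_k ρ
      have hshift : σ n k * braidρ n = braidρ n * σ n (k + 1) := by
        rw [rho_eq]
        exact shift_desc (by omega) (by omega) (by omega) (by omega)
      calc braidρ n * desc n (k + 1) 1
          = braidρ n * (σ n (k + 1) * desc n k 1) := by rw [desc_succ (by omega)]
        _ = (braidρ n * σ n (k + 1)) * desc n k 1 := by rw [mul_assoc]
        _ = (σ n k * braidρ n) * desc n k 1 := by rw [hshift]
        _ = σ n k * (braidρ n * desc n k 1) := by rw [mul_assoc]
        _ = σ n k * (desc n (k - 1) 1 * (braidρ n * σ n 1)) := by rw [ih hk (by omega)]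
        _ = (σ n k * desc n (k - 1) 1) * (braidρ n * σ n 1) := by rw [mul_assoc]
        _ = desc n (k + 1 - 1) 1 * (braidρ n * σ n 1) := by
            have hd : σ n k * desc n (k - 1) 1 = desc n k 1 := by
              cases k with
              | zero => omega
              | succ k0 => rw [Nat.add_sub_cancel, desc_succ (by omega)]
            rw [hd, Nat.add_sub_cancel]
    · have hk0 : k = 0 := by omega
      subst hk0
      rw [desc_succ (by omega), desc_zero, mul_one]
      simp [desc_zero]

lemma rho_pow_desc (hn : 3 ≤ n) {k : ℕ} (h1 : 2 ≤ k) (h2 : k ≤ n) :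
    braidρ n ^ k = desc n (n - k) 1 * (braidρ n * ((σ n 1 * braidρ n) ^ (k - 2) * σ n 1)) := by
  induction k with
  | zero => omega
  | succ k ih =>
    by_cases hk : 2 ≤ k
    · calc braidρ n ^ (k + 1) = braidρ n * braidρ n ^ k := by rw [pow_succ']
        _ = braidρ n * (desc n (n - k) 1 * (braidρ n * ((σ n 1 * braidρ n) ^ (k - 2) * σ n 1))) := by
            rw [ih hk (by omega)]
        _ = (braidρ n * desc n (n - k) 1) * (braidρ n * ((σ n 1 * braidρ n) ^ (k - 2) * σ n 1)) := by
            rw [mul_assoc]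
        _ = (desc n (n - k - 1) 1 * (braidρ n * σ n 1)) *
              (braidρ n * ((σ n 1 * braidρ n) ^ (k - 2) * σ n 1)) := by
            rw [rho_desc hn (by omega) (by omega)]
        _ = desc n (n - (k + 1)) 1 *
              (braidρ n * ((σ n 1 * braidρ n) ^ (k + 1 - 2) * σ n 1)) := by
            have e1 : n - k - 1 = n - (k + 1) := by omega
            have e2 : (σ n 1 * braidρ n) ^ (k + 1 - 2) = (σ n 1 * braidρ n) *
                (σ n 1 * braidρ n) ^ (k - 2) := by
              have e3 : k + 1 - 2 = (k - 2) + 1 := by omega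
              rw [e3, pow_succ']
            rw [e1, e2]
            simp only [mul_assoc]
    · have hk2 : k = 1 := by omega
      subst hk2
      -- ρ^2 = desc (n-2) 1 * (ρ * σ 1)
      have hbase : braidρ n * braidρ n = desc n (n - 2) 1 * (braidρ n * σ n 1) := by
        calc braidρ n * braidρ n = braidρ n * desc n (n - 1) 1 := by rw [← rho_eq]
          _ = desc n (n - 1 - 1) 1 * (braidρ n * σ n 1) := by
              rw [rho_desc hn (by omega) (by omega)]
          _ = desc n (n - 2) 1 * (braidρ n * σ n 1) := by
              have : n - 1 - 1 = n - 2 := by omega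
              rw [this]
      calc braidρ n ^ 2 = braidρ n * braidρ n := sq (braidρ n)
        _ = desc n (n - 2) 1 * (braidρ n * σ n 1) := hbase
        _ = desc n (n - 2) 1 * (braidρ n * ((σ n 1 * braidρ n) ^ (2 - 2) * σ n 1)) := by
            norm_num

/-- `ρ^{n-1} = (σ_1 ρ)^{n-2} σ_1`. -/
lemma rho_pow_pred (hn : 3 ≤ n) :
    braidρ n ^ (n - 1) = (σ n 1 * braidρ n) ^ (n - 2) * σ n 1 := by
  have h := rho_pow_desc hn (k := n - 1) (by omega) (by omega)
  have e1 : n - (n - 1) = 1 := by omega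
  have e2 : desc n 1 1 = σ n 1 := by
    rw [desc_succ (by omega), desc_zero, mul_one]
  have e3 : n - 1 - 2 = n - 3 := by omega
  have e4 : n - 2 = (n - 3) + 1 := by omega
  rw [e1, e2, e3] at h
  rw [h, e4, pow_succ']
  simp only [mul_assoc]

/-- `θ = ρ (σ_1 ρ)^{n-2} σ_1`. -/
lemma theta_rho_form (hn : 3 ≤ n) :
    braidθ n = braidρ n * ((σ n 1 * braidρ n) ^ (n - 2) * σ n 1) := by
  rw [← rho_pow_n hn, ← rho_pow_pred hn, ← pow_succ']
  congr 1
  omega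


/-! ### `braidβ` basic lemmas -/

lemma braidβ_nil : braidβ n [] = 1 := rfl

lemma braidβ_cons {i : ℕ} {I : List ℕ} :
    braidβ n (i :: I) = (σ n 1 ^ i * braidρ n) * braidβ n I := by
  rw [braidβ, braidβ, List.map_cons, List.prod_cons]

lemma braidβ_append {I J : List ℕ} :
    braidβ n (I ++ J) = braidβ n I * braidβ n J := by
  rw [braidβ, braidβ, braidβ, List.map_append, List.prod_append]

lemma braidβ_replicate (m : ℕ) :
    braidβ n (List.replicate m 1) = (σ n 1 * braidρ n) ^ m := by
  induction m with
  | zero => rw [List.replicate_zero, braidβ_nil, pow_zero]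
  | succ m ih =>
    rw [List.replicate_succ, braidβ_cons, ih, pow_one, pow_succ']

lemma sigma_pow_braidβ_cons {s i : ℕ} {I : List ℕ} :
    σ n 1 ^ s * braidβ n (i :: I) = braidβ n ((s + i) :: I) := by
  simp only [braidβ_cons, ← mul_assoc]
  rw [← pow_add]

/-! ### The normal-form predicate -/

/-- `b` can be written as `θ^μ β(I) σ_1^s`. -/
def NF (n : ℕ) (b : BraidGroup n) : Prop :=
  ∃ (μ : ℤ) (I : List ℕ) (s : ℕ), (∀ i ∈ I, 1 ≤ i) ∧
    b = braidθ n ^ μ * (braidβ n I * σ n 1 ^ s)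

lemma theta_pull (hn : 3 ≤ n) (ν : ℤ) (x y : BraidGroup n) :
    x * (braidθ n ^ ν * y) = braidθ n ^ ν * (x * y) := by
  rw [← mul_assoc, ← (theta_zpow_commute hn ν x).eq, mul_assoc]

lemma NF_one : NF n 1 :=
  ⟨0, [], 0, by simp, by simp [braidβ_nil]⟩

lemma NF_sigma : NF n (σ n 1) :=
  ⟨0, [], 1, by simp, by simp [braidβ_nil]⟩

lemma NF_mul (hn : 3 ≤ n) {a b : BraidGroup n} (ha : NF n a) (hb : NF n b) : NF n (a * b) := by
  obtain ⟨μ, I, s, hI, rfl⟩ := ha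
  obtain ⟨ν, J, t, hJ, rfl⟩ := hb
  have key : braidθ n ^ μ * (braidβ n I * σ n 1 ^ s) * (braidθ n ^ ν * (braidβ n J * σ n 1 ^ t))
      = braidθ n ^ (μ + ν) * ((braidβ n I * σ n 1 ^ s) * (braidβ n J * σ n 1 ^ t)) := by
    rw [mul_assoc, theta_pull hn, ← mul_assoc, ← zpow_add]
  rw [key]
  cases J with
  | nil =>
    refine ⟨μ + ν, I, s + t, hI, ?_⟩
    rw [braidβ_nil, one_mul, pow_add]
    simp only [mul_assoc]
  | cons j J' =>
    refine ⟨μ + ν, I ++ ((s + j) :: J'), t, ?_, ?_⟩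
    · intro i hi
      rcases List.mem_append.mp hi with h | h
      · exact hI i h
      · rcases List.mem_cons.mp h with h | h
        · have := hJ j List.mem_cons_self
          omega
        · exact hJ i (List.mem_cons_of_mem j h)
    · rw [braidβ_append, ← sigma_pow_braidβ_cons]
      simp only [mul_assoc]

lemma NF_theta_mul (hn : 3 ≤ n) (ν : ℤ) {b : BraidGroup n} (hb : NF n b) :
    NF n (braidθ n ^ ν * b) := by
  obtain ⟨μ, I, s, hI, rfl⟩ := hb
  exact ⟨ν + μ, I, s, hI, by rw [← mul_assoc, ← zpow_add]⟩

lemma NF_pow (hn : 3 ≤ n) {b : BraidGroup n} (hb : NF n b) (m : ℕ) : NF n (b ^ m) := by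
  induction m with
  | zero => simpa using NF_one
  | succ m ih => rw [pow_succ]; exact NF_mul hn ih hb

/-! ### Membership of the generators and their inverses -/

lemma NF_rho_pow_pred (hn : 3 ≤ n) : NF n (braidρ n ^ (n - 1)) := by
  refine ⟨0, List.replicate (n - 2) 1, 1, by simp, ?_⟩
  rw [rho_pow_pred hn, braidβ_replicate, zpow_zero, one_mul, pow_one]

lemma NF_sr_pow (hn : 3 ≤ n) : NF n ((σ n 1 * braidρ n) ^ (n - 2)) := by
  refine ⟨0, List.replicate (n - 2) 1, 0, by simp, ?_⟩
  rw [braidβ_replicate, zpow_zero, one_mul, pow_zero, mul_one]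

lemma NF_rho (hn : 3 ≤ n) : NF n (braidρ n) := by
  obtain ⟨m, rfl⟩ : ∃ m, n = m + 3 := ⟨n - 3, by omega⟩
  set N := m + 3 with hN
  have e : (N - 1) * (N - 1) = N * (m + 1) + 1 := by
    show (m + 2) * (m + 2) = (m + 3) * (m + 1) + 1
    ring
  have harith : braidρ N ^ ((N - 1) * (N - 1)) = braidθ N ^ (m + 1) * braidρ N := by
    rw [e, pow_succ, pow_mul, rho_pow_n hn]
  have hrho : braidρ N = braidθ N ^ (-(m + 1 : ℤ)) * braidρ N ^ ((N - 1) * (N - 1)) := by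
    rw [harith, ← mul_assoc, ← zpow_natCast (braidθ N) (m + 1)]
    group
  rw [hrho]
  refine NF_theta_mul hn _ ?_
  rw [pow_mul]
  exact NF_pow hn (NF_rho_pow_pred hn) (N - 1)

lemma NF_rho_inv (hn : 3 ≤ n) : NF n (braidρ n)⁻¹ := by
  have h : braidθ n ^ (-1 : ℤ) * braidρ n ^ (n - 1) * braidρ n = 1 := by
    rw [mul_assoc, ← pow_succ]
    have e : n - 1 + 1 = n := by omega
    rw [e, rho_pow_n hn]
    group
  have h2 : braidθ n ^ (-1 : ℤ) * braidρ n ^ (n - 1) = (braidρ n)⁻¹ :=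
    eq_inv_of_mul_eq_one_left h
  rw [← h2]
  exact NF_theta_mul hn _ (NF_rho_pow_pred hn)

lemma NF_sigma_inv (hn : 3 ≤ n) : NF n (σ n 1)⁻¹ := by
  have hg : braidρ n * (σ n 1 * braidρ n) ^ (n - 2) = braidθ n * (σ n 1)⁻¹ := by
    rw [theta_rho_form hn]
    group
  have h : braidθ n ^ (-1 : ℤ) * (braidρ n * (σ n 1 * braidρ n) ^ (n - 2)) * σ n 1 = 1 := by
    rw [hg]
    group
  have h2 : braidθ n ^ (-1 : ℤ) * (braidρ n * (σ n 1 * braidρ n) ^ (n - 2)) = (σ n 1)⁻¹ :=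
    eq_inv_of_mul_eq_one_left h
  rw [← h2]
  exact NF_theta_mul hn _ (NF_mul hn (NF_rho hn) (NF_sr_pow hn))


/-! ### The subgroup of elements whose normal form (and that of the inverse) exists -/

/-- Subgroup of elements `b` with both `b` and `b⁻¹` in normal form. -/
def good (hn : 3 ≤ n) : Subgroup (BraidGroup n) where
  carrier := {b | NF n b ∧ NF n b⁻¹}
  one_mem' := ⟨NF_one, by rw [inv_one]; exact NF_one⟩
  mul_mem' := by
    rintro a b ⟨ha1, ha2⟩ ⟨hb1, hb2⟩
    exact ⟨NF_mul hn ha1 hb1, by rw [mul_inv_rev]; exact NF_mul hn hb2 ha2⟩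
  inv_mem' := by
    rintro a ⟨ha1, ha2⟩
    exact ⟨ha2, by rw [inv_inv]; exact ha1⟩

lemma rho_mem (hn : 3 ≤ n) : braidρ n ∈ good hn := ⟨NF_rho hn, NF_rho_inv hn⟩

lemma sigma_mem (hn : 3 ≤ n) {i : ℕ} (h1 : 1 ≤ i) (h2 : i ≤ n - 1) : σ n i ∈ good hn := by
  induction i with
  | zero => omega
  | succ i ih =>
    by_cases hi : 1 ≤ i
    · have hshift : σ n i * braidρ n = braidρ n * σ n (i + 1) := by
        rw [rho_eq]
        exact shift_desc (by omega) (by omega) (by omega) (by omega)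
      have hconj : σ n (i + 1) = (braidρ n)⁻¹ * (σ n i * braidρ n) := by
        rw [hshift]
        group
      rw [hconj]
      exact mul_mem (inv_mem (rho_mem hn)) (mul_mem (ih hi (by omega)) (rho_mem hn))
    · have hi0 : i = 0 := by omega
      subst hi0
      exact ⟨NF_sigma, NF_sigma_inv hn⟩

lemma all_NF (hn : 3 ≤ n) (b : BraidGroup n) : NF n b := by
  have hb : b ∈ good hn := by
    refine PresentedGroup.generated_by (braidRels n) (good hn) (fun j => ?_) b
    have hj := j.isLt
    rw [of_eq_sigma j]
    exact sigma_mem hn (by omega) (by omega)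
  exact hb.1

end BraidNF

/-- every element of `B_n` is conjugate to `θ^μ β(I)` for some integer `μ`
and some finite nonempty sequence `I` of positive integers. -/
theorem conj_normal_form (n : ℕ) (hn : 3 ≤ n) (b : BraidGroup n) :
    ∃ (μ : ℤ) (I : List ℕ), I ≠ [] ∧ (∀ i ∈ I, 1 ≤ i) ∧
      IsConj b (braidθ n ^ μ * braidβ n I) := by
  obtain ⟨μ, I, s, hI, rfl⟩ := BraidNF.all_NF hn b
  cases I with
  | nil =>
    refine ⟨μ - 1, (s + 1) :: List.replicate (n - 2) 1, by simp, ?_, ?_⟩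
    · intro i hi
      rcases List.mem_cons.mp hi with h | h
      · omega
      · have := List.eq_of_mem_replicate h
        omega
    · -- the two sides are in fact equal
      have hg : braidρ n * (σ n 1 * braidρ n) ^ (n - 2) = braidθ n * (σ n 1)⁻¹ := by
        rw [BraidNF.theta_rho_form hn]
        group
      have hβ : braidβ n ((s + 1) :: List.replicate (n - 2) 1) =
          σ n 1 ^ (s + 1) * (braidθ n * (σ n 1)⁻¹) := by
        rw [BraidNF.braidβ_cons, BraidNF.braidβ_replicate, mul_assoc, hg]
      have heq : braidθ n ^ μ * (braidβ n [] * σ n 1 ^ s) =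
          braidθ n ^ (μ - 1) * braidβ n ((s + 1) :: List.replicate (n - 2) 1) := by
        rw [hβ, BraidNF.braidβ_nil, one_mul]
        have hc : braidθ n * σ n 1 ^ (s + 1) = σ n 1 ^ (s + 1) * braidθ n :=
          (BraidNF.theta_commute hn _).eq
        conv_rhs => rw [← mul_assoc (σ n 1 ^ (s + 1)) (braidθ n) ((σ n 1)⁻¹), ← hc]
        group
      rw [heq]
  | cons i I' =>
    refine ⟨μ, (s + i) :: I', by simp, ?_, ?_⟩
    · intro j hj
      rcases List.mem_cons.mp hj with h | h
      · have := hI i List.mem_cons_self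
        omega
      · exact hI j (List.mem_cons_of_mem i h)
    · refine isConj_iff.mpr ⟨σ n 1 ^ s, ?_⟩
      calc σ n 1 ^ s * (braidθ n ^ μ * (braidβ n (i :: I') * σ n 1 ^ s)) * (σ n 1 ^ s)⁻¹
          = braidθ n ^ μ * (σ n 1 ^ s * braidβ n (i :: I')) := by
            rw [BraidNF.theta_pull hn]
            group
        _ = braidθ n ^ μ * braidβ n ((s + i) :: I') := by
            rw [BraidNF.sigma_pow_braidβ_cons]
end

section
/- In the braid group B_n, for positive integers i and j, β(i,1,1,…,1,j) with n-2 ones in the middle equals θ·β(i+j-1), i.e. σ_1^i ρ (σ_1ρ)^{n-2} σ_1^j ρ = θ σ_1^{i+j-1} ρ. -/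
namespace BraidAux

variable {n : ℕ}

lemma rel_eq_one {r : FreeGroup (Fin (n-1))} (h : r ∈ braidRels n) :
    PresentedGroup.mk (braidRels n) r = 1 :=
  (QuotientGroup.eq_one_iff r).mpr (Subgroup.subset_normalClosure h)

lemma sigma_eq (a : ℕ) (h1 : 1 ≤ a) (h2 : a ≤ n - 1) :
    σ n a = PresentedGroup.mk (braidRels n) (FreeGroup.of (⟨a - 1, by omega⟩ : Fin (n-1))) := by
  rw [σ, dif_pos ⟨h1, h2⟩]; rfl

lemma sigma_junk (a : ℕ) (h : ¬ (1 ≤ a ∧ a ≤ n - 1)) : σ n a = 1 := by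
  rw [σ, dif_neg h]

/-- distant generators commute (no side conditions thanks to junk values). -/
lemma sigma_comm (a b : ℕ) (hab : a + 2 ≤ b) : σ n a * σ n b = σ n b * σ n a := by
  rcases Nat.eq_zero_or_pos a with rfl | ha
  · rw [sigma_junk 0 (by omega), one_mul, mul_one]
  rcases le_or_gt b (n-1) with hb | hb
  · have h1 := rel_eq_one (n := n) (Or.inl ⟨⟨a-1, by omega⟩, ⟨b-1, by omega⟩, by simp; omega,
      rfl⟩)
    rw [sigma_eq a ha (by omega), sigma_eq b (by omega) hb]
    simp only [map_mul, map_inv] at h1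
    have h2 := mul_inv_eq_one.mp h1
    exact (mul_inv_eq_iff_eq_mul.mp h2)
  · rw [sigma_junk b (by omega), one_mul, mul_one]

lemma sigma_braid (a : ℕ) (ha : 1 ≤ a) (hb : a + 1 ≤ n - 1) :
    σ n a * σ n (a+1) * σ n a = σ n (a+1) * σ n a * σ n (a+1) := by
  have h1 := rel_eq_one (n := n) (Or.inr ⟨⟨a-1, by omega⟩, ⟨a, by omega⟩, by simp; omega, rfl⟩)
  rw [sigma_eq a ha (by omega), sigma_eq (a+1) (by omega) hb]
  simp only [map_mul, map_inv] at h1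
  have he : (⟨a + 1 - 1, by omega⟩ : Fin (n-1)) = ⟨a, by omega⟩ := by simp
  rw [he]
  exact mul_inv_eq_one.mp h1




theorem cmul {G : Type*} [Group G] {a b c d : G} (h : a * b = c * d) :
    ∀ x : G, a * (b * x) = c * (d * x) := fun x => by rw [← mul_assoc, h, mul_assoc]

theorem cmul3 {G : Type*} [Group G] {a b e c d f : G} (h : a * b * e = c * d * f) :
    ∀ x : G, a * (b * (e * x)) = c * (d * (f * x)) := fun x => by
  rw [← mul_assoc, ← mul_assoc, h, mul_assoc, mul_assoc]

variable (n) in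
/-- `Q m = σ_1 σ_2 ⋯ σ_m` (ascending). -/
noncomputable def Q : ℕ → BraidGroup n
  | 0 => 1
  | (m+1) => Q m * σ n (m+1)

variable (n) in
/-- `R m = σ_m σ_{m-1} ⋯ σ_1` (descending). -/
noncomputable def R : ℕ → BraidGroup n
  | 0 => 1
  | (m+1) => σ n (m+1) * R m

variable (n) in
/-- `S m k = σ_m σ_{m-1} ⋯ σ_{m-k+1}` (k letters descending from m). -/
noncomputable def S (m : ℕ) : ℕ → BraidGroup n
  | 0 => 1
  | (k+1) => S m k * σ n (m - k)

variable (n) in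
/-- `A m j = σ_{m+1-j} ⋯ σ_{m-1} σ_m` (j letters ascending up to m). -/
noncomputable def A (m : ℕ) : ℕ → BraidGroup n
  | 0 => 1
  | (j+1) => σ n (m - j) * A m j

variable (n) in
/-- half twist prefix: `D m = Q m * Q (m-1) * ⋯ * Q 1`. -/
noncomputable def D : ℕ → BraidGroup n
  | 0 => 1
  | (m+1) => Q n (m+1) * D m

variable (n) in
noncomputable def B : ℕ → BraidGroup n
  | 0 => 1
  | (k+1) => σ n (k+2) * B k

lemma comm_Q (a b : ℕ) (hab : a + 2 ≤ b) : σ n b * Q n a = Q n a * σ n b := by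
  induction a with
  | zero => rw [Q, one_mul, mul_one]
  | succ m ih =>
      rw [Q, ← mul_assoc, ih (by omega), mul_assoc, ← sigma_comm (m+1) b (by omega), ← mul_assoc]

lemma comm_S (a j b : ℕ) (hab : a + 2 ≤ b) : σ n b * S n a j = S n a j * σ n b := by
  induction j with
  | zero => rw [S, one_mul, mul_one]
  | succ k ih =>
      rw [S, ← mul_assoc, ih, mul_assoc, ← sigma_comm (a-k) b (by omega), ← mul_assoc]

lemma comm_D (a b : ℕ) (hab : a + 2 ≤ b) : σ n b * D n a = D n a * σ n b := by
  induction a with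
  | zero => rw [D, one_mul, mul_one]
  | succ m ih =>
      rw [D, ← mul_assoc, comm_Q _ _ hab, mul_assoc, ih (by omega), ← mul_assoc]

lemma comm_R (a b : ℕ) (hab : a + 2 ≤ b) : σ n b * R n a = R n a * σ n b := by
  induction a with
  | zero => rw [R, one_mul, mul_one]
  | succ m ih =>
      rw [R, ← mul_assoc, ← sigma_comm (m+1) b (by omega), mul_assoc, ih (by omega), ← mul_assoc]

lemma Q_push (j m : ℕ) (hj : 1 ≤ j) (hjm : j + 1 ≤ m) (hm : m ≤ n - 1) :
    Q n m * σ n j = σ n (j+1) * Q n m := by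
  induction m, hjm using Nat.le_induction with
  | base =>
      obtain ⟨j', rfl⟩ : ∃ j', j = j' + 1 := ⟨j - 1, by omega⟩
      have hb := sigma_braid (n := n) (j'+1) (by omega) (by omega)
      rw [mul_assoc, mul_assoc] at hb
      rw [show j' + 1 + 1 = j' + 2 from rfl, Q, Q]
      simp only [mul_assoc, show j' + 1 + 1 = j' + 2 from rfl]
      rw [hb, ← cmul (comm_Q j' (j'+2) (by omega))]
  | succ m hm' ih =>
      rw [Q, mul_assoc, ← sigma_comm j (m+1) (by omega), ← mul_assoc, ih (by omega),
        mul_assoc]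

lemma R_push (j m : ℕ) (hj : 1 ≤ j) (hjm : j + 1 ≤ m) (hm : m ≤ n - 1) :
    σ n j * R n m = R n m * σ n (j+1) := by
  induction m, hjm using Nat.le_induction with
  | base =>
      obtain ⟨j', rfl⟩ : ∃ j', j = j' + 1 := ⟨j - 1, by omega⟩
      rw [show j' + 1 + 1 = j' + 2 from rfl, R, R]
      simp only [← mul_assoc]
      rw [sigma_braid (j'+1) (by omega) (by omega)]
      simp only [mul_assoc, show j' + 1 + 1 = j' + 2 from rfl]
      rw [comm_R j' (j'+2) (by omega)]
  | succ m hm' ih =>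
      rw [R, ← mul_assoc, sigma_comm j (m+1) (by omega), mul_assoc, ih (by omega),
        ← mul_assoc]

lemma Q_succ (m : ℕ) : Q n (m+1) = Q n m * σ n (m+1) := by rw [Q]
lemma R_succ (m : ℕ) : R n (m+1) = σ n (m+1) * R n m := by rw [R]
lemma S_succ (m k : ℕ) : S n m (k+1) = S n m k * σ n (m - k) := by rw [S]
lemma A_succ (m j : ℕ) : A n m (j+1) = σ n (m - j) * A n m j := by rw [A]
lemma D_succ (m : ℕ) : D n (m+1) = Q n (m+1) * D n m := by rw [D]
lemma B_succ (k : ℕ) : B n (k+1) = σ n (k+2) * B n k := by rw [B]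

lemma S_left (m j : ℕ) : S n m (j+1) = σ n m * S n (m-1) j := by
  induction j with
  | zero => rw [S_succ, S, S, one_mul, mul_one, Nat.sub_zero]
  | succ k ih =>
      rw [S_succ m (k+1), ih, S_succ (m-1) k, mul_assoc,
        show m - (k+1) = m - 1 - k from by omega]

lemma R_split (j t : ℕ) : S n (j + t) j * R n t = R n (j + t) := by
  induction j generalizing t with
  | zero => rw [S, one_mul, Nat.zero_add]
  | succ k ih =>
      rw [S_succ, show k + 1 + t - k = t + 1 from by omega, mul_assoc, ← R_succ,
        show k + 1 + t = k + (t+1) from by omega]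
      exact ih (t+1)

lemma S_eq_R (m : ℕ) : S n m m = R n m := by
  have := R_split (n := n) m 0
  rwa [R, mul_one, Nat.add_zero] at this

lemma S_pushQ (a b : ℕ) (hab : a + 1 ≤ b) (hb : b ≤ n - 1) :
    ∀ j, j ≤ a → S n (a+1) j * Q n b = Q n b * S n a j := by
  intro j
  induction j with
  | zero => intro _; rw [S, S, one_mul, mul_one]
  | succ k ih =>
      intro hk
      rw [S_succ, show a + 1 - k = (a - k) + 1 from by omega, mul_assoc,
        ← Q_push (a-k) b (by omega) (by omega) hb, ← mul_assoc, ih (by omega),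
        S_succ, mul_assoc]

lemma L4c (m k : ℕ) (hk : k ≤ m) (hm : m + 2 ≤ n - 1) :
    S n (m+2) (k+1) * Q n (m+1) = Q n m * S n (m+2) (k+2) := by
  have h1 : S n (m+2) (k+1) = σ n (m+2) * S n (m+1) k := by
    rw [S_left]; norm_num
  have h2 : S n (m+2) (k+2) = σ n (m+2) * (σ n (m+1) * S n m k) := by
    rw [S_left]; norm_num; rw [S_left]; norm_num
  rw [h1, h2, mul_assoc, S_pushQ m (m+1) (by omega) (by omega) k hk, Q_succ m]
  simp only [mul_assoc]
  rw [cmul (comm_Q m (m+2) (by omega))]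

lemma L4d (m k : ℕ) (hm : m + 2 ≤ n - 1) :
    S n (m+2) (k+2) * σ n (m+2) = σ n (m+1) * S n (m+2) (k+2) := by
  have h2 : S n (m+2) (k+2) = σ n (m+2) * (σ n (m+1) * S n m k) := by
    rw [S_left]; norm_num; rw [S_left]; norm_num
  have hb := sigma_braid (n := n) (m+1) (by omega) (by omega)
  rw [show m+1+1 = m+2 from rfl] at hb
  rw [h2]
  simp only [mul_assoc]
  rw [← comm_S m k (m+2) (by omega), ← cmul3 hb]

lemma Q_pow_S (m : ℕ) (hm : m + 1 ≤ n - 1) :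
    ∀ k, k ≤ m + 1 → Q n (m+1) ^ k = Q n m ^ k * S n (m+1) k := by
  intro k
  induction k with
  | zero => intro _; rw [pow_zero, pow_zero, S, mul_one]
  | succ k' ih =>
      intro hk
      match k' with
      | 0 => rw [pow_one, pow_one, Q_succ, S_succ, S, one_mul, Nat.sub_zero]
      | (k''+1) =>
          obtain ⟨m', rfl⟩ : ∃ m', m = m' + 1 := ⟨m - 1, by omega⟩
          rw [pow_succ, ih (by omega), Q_succ (m'+1), show m'+1+1 = m'+2 from rfl,
            show k''+1+1 = k''+2 from rfl,
            mul_assoc (Q n (m'+1) ^ (k''+1)), ← mul_assoc (S n (m'+2) (k''+1)),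
            L4c m' k'' (by omega) (by omega),
            mul_assoc (Q n m'), L4d m' k'' (by omega), ← mul_assoc (Q n m'),
            ← Q_succ m', ← mul_assoc, ← pow_succ]

lemma D_flip_alt : ∀ m, m + 1 ≤ n - 1 →
    ((∀ k l, k + l = m + 2 → 1 ≤ k → 1 ≤ l → D n (m+1) * σ n k = σ n l * D n (m+1)) ∧
     D n (m+1) = D n m * R n (m+1)) := by
  intro m
  induction m with
  | zero =>
      intro _
      have hD : D n 1 = σ n 1 := by rw [D_succ, D, Q_succ, Q, one_mul, mul_one]
      constructor
      · intro k l hkl hk hl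
        obtain rfl : k = 1 := by omega
        obtain rfl : l = 1 := by omega
        rw [hD]
      · rw [hD, D, R_succ, R, one_mul, mul_one]
  | succ m ih =>
      intro h
      have ihm := ih (by omega)
      have halt : D n (m+1) * R n (m+2) = Q n (m+2) * D n (m+1) := by
        calc D n (m+1) * R n (m+2)
            = Q n (m+1) * (D n m * (σ n (m+2) * R n (m+1))) := by
              rw [D_succ m, R_succ (m+1), mul_assoc]
          _ = Q n (m+1) * (σ n (m+2) * (D n m * R n (m+1))) := by
              rw [← cmul (comm_D m (m+2) (by omega))]
          _ = Q n (m+1) * (σ n (m+2) * D n (m+1)) := by rw [← ihm.2]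
          _ = Q n (m+2) * D n (m+1) := by rw [Q_succ (m+1), mul_assoc]
      have alt : D n (m+2) = D n (m+1) * R n (m+2) := by
        rw [halt, ← D_succ (m+1)]
      refine ⟨?_, alt⟩
      intro k l hkl hk hl
      rcases Nat.lt_or_ge k (m+2) with hklt | hkge
      · obtain ⟨l', rfl⟩ : ∃ l', l = l' + 1 := ⟨l - 1, by omega⟩
        have hl' : 1 ≤ l' := by omega
        rw [D_succ (m+1), show m+1+1 = m+2 from rfl, mul_assoc, ihm.1 k l' (by omega) hk hl',
          ← mul_assoc, Q_push l' (m+2) hl' (by omega) (by omega), mul_assoc]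
      · obtain rfl : k = m + 2 := by omega
        obtain rfl : l = 1 := by omega
        symm
        calc σ n 1 * D n (m+2) = σ n 1 * D n (m+1) * R n (m+2) := by
              rw [alt, mul_assoc]
          _ = D n (m+1) * (σ n (m+1) * R n (m+2)) := by
              rw [← ihm.1 (m+1) 1 (by omega) (by omega) (by omega), mul_assoc]
          _ = D n (m+1) * (R n (m+2) * σ n (m+2)) := by
              rw [R_push (m+1) (m+2) (by omega) (by omega) (by omega)]
          _ = D n (m+2) * σ n (m+2) := by rw [alt, mul_assoc]

lemma D_sq : ∀ m, m ≤ n - 1 → D n m * D n m = Q n m ^ (m+1) := by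
  intro m
  induction m with
  | zero => intro _; rw [D, Q, one_mul, pow_one]
  | succ m ih =>
      intro hm
      calc D n (m+1) * D n (m+1)
          = Q n (m+1) * D n m * (D n m * R n (m+1)) := by
            nth_rewrite 1 [D_succ m]
            nth_rewrite 1 [(D_flip_alt m hm).2]
            rfl
        _ = Q n (m+1) * (Q n m ^ (m+1) * R n (m+1)) := by
            rw [mul_assoc, ← mul_assoc (D n m), ih (by omega)]
        _ = Q n (m+1) * (Q n m ^ (m+1) * S n (m+1) (m+1)) := by rw [S_eq_R]
        _ = Q n (m+1) * Q n (m+1) ^ (m+1) := by rw [← Q_pow_S m hm (m+1) le_rfl]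
        _ = Q n (m+1) ^ (m+2) := by rw [← pow_succ']

lemma A_shift (m j : ℕ) : A n (m+1) (j+1) = A n m j * σ n (m+1) := by
  induction j with
  | zero => rw [A_succ, A, A, one_mul, mul_one, Nat.sub_zero]
  | succ k ih =>
      rw [A_succ (m+1) (k+1), ih, show m + 1 - (k+1) = m - k from by omega, ← mul_assoc,
        ← A_succ m k]

lemma A_diag (m : ℕ) : A n m m = Q n m := by
  induction m with
  | zero => rw [A, Q]
  | succ m ih => rw [A_shift, ih, ← Q_succ]

lemma D_R (m : ℕ) (hm : m + 1 ≤ n - 1) :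
    ∀ j, j ≤ m + 1 → D n (m+1) * R n j = A n (m+1) j * D n (m+1) := by
  intro j
  induction j with
  | zero => intro _; rw [R, A, mul_one, one_mul]
  | succ k ih =>
      intro hk
      rw [R_succ, ← mul_assoc,
        (D_flip_alt m hm).1 (k+1) (m+1-k) (by omega) (by omega) (by omega),
        mul_assoc, ih (by omega), ← mul_assoc, ← A_succ]

lemma DR_QD (m : ℕ) (hm : m + 1 ≤ n - 1) :
    D n (m+1) * R n (m+1) = Q n (m+1) * D n (m+1) := by
  rw [D_R m hm (m+1) le_rfl, A_diag]

lemma DR_QD' (m : ℕ) (h1 : 1 ≤ m) (hm : m ≤ n - 1) :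
    D n m * R n m = Q n m * D n m := by
  obtain ⟨m', rfl⟩ : ∃ m', m = m' + 1 := ⟨m - 1, by omega⟩
  exact DR_QD m' hm

lemma D_flip' (m : ℕ) (h1 : 1 ≤ m) (hm2 : m ≤ n - 1) (k l : ℕ) (hkl : k + l = m + 1)
    (hk : 1 ≤ k) (hl : 1 ≤ l) : D n m * σ n k = σ n l * D n m := by
  obtain ⟨m', rfl⟩ : ∃ m', m = m' + 1 := ⟨m - 1, by omega⟩
  exact (D_flip_alt m' (by omega)).1 k l (by omega) hk hl

lemma delta_conj_pow (hn : 3 ≤ n) :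
    ∀ k : ℕ, D n (n-1) * R n (n-1) ^ k = Q n (n-1) ^ k * D n (n-1) := by
  intro k
  induction k with
  | zero => rw [pow_zero, pow_zero, one_mul, mul_one]
  | succ k ih =>
      rw [pow_succ, pow_succ, ← mul_assoc, ih, mul_assoc,
        DR_QD' (n-1) (by omega) le_rfl, ← mul_assoc]

lemma theta_eq_Dsq (hn : 3 ≤ n) : Q n (n-1) ^ n = D n (n-1) * D n (n-1) := by
  rw [D_sq (n-1) le_rfl, show n - 1 + 1 = n from by omega]

lemma rho_pow_eq (hn : 3 ≤ n) : R n (n-1) ^ n = Q n (n-1) ^ n := by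
  have h := delta_conj_pow hn n
  rw [theta_eq_Dsq hn, mul_assoc] at h
  exact (mul_left_cancel h).trans (theta_eq_Dsq hn).symm

lemma theta_comm_sigma1 (hn : 3 ≤ n) :
    Q n (n-1) ^ n * σ n 1 = σ n 1 * Q n (n-1) ^ n := by
  rw [theta_eq_Dsq hn, mul_assoc,
    D_flip' (n-1) (by omega) le_rfl 1 (n-1) (by omega) (by omega) (by omega),
    ← mul_assoc, D_flip' (n-1) (by omega) le_rfl (n-1) 1 (by omega) (by omega) (by omega),
    mul_assoc]

lemma sigma1_rho_pow (hn : 3 ≤ n) :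
    ∀ k, k + 1 ≤ n - 1 → σ n 1 * R n (n-1) ^ k = R n (n-1) ^ k * σ n (k+1) := by
  intro k
  induction k with
  | zero => intro _; rw [pow_zero, one_mul, mul_one]
  | succ k ih =>
      intro hk
      rw [pow_succ, ← mul_assoc, ih (by omega), mul_assoc,
        R_push (k+1) (n-1) (by omega) (by omega) le_rfl, ← mul_assoc]

lemma B_sigma1 : ∀ k, B n k * σ n 1 = R n (k+1) := by
  intro k
  induction k with
  | zero => rw [B, R_succ, R, one_mul, mul_one]
  | succ k ih => rw [B_succ, mul_assoc, ih, ← R_succ, show k+1+1 = k+2 from rfl]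

lemma pow_form (hn : 3 ≤ n) :
    ∀ m, m ≤ n - 2 → (σ n 1 * R n (n-1)) ^ m = R n (n-1) ^ m * B n m := by
  intro m
  induction m with
  | zero => intro _; rw [pow_zero, pow_zero, B, one_mul]
  | succ m ih =>
      intro hm
      rw [pow_succ', ih (by omega), ← mul_assoc, mul_assoc (σ n 1), ← pow_succ',
        sigma1_rho_pow hn (m+1) (by omega), mul_assoc, B_succ m]

lemma key_pow (hn : 3 ≤ n) :
    (σ n 1 * R n (n-1)) ^ (n-1) = Q n (n-1) ^ n := by
  have e1 : (σ n 1 * R n (n-1)) ^ (n-1) = (σ n 1 * R n (n-1)) ^ (n-2) * (σ n 1 * R n (n-1)) := by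
    rw [← pow_succ]; congr 1; omega
  have e2 : R n (n-2+1) = R n (n-1) := by congr 1; omega
  have e3 : R n (n-1) ^ (n-2) * R n (n-1) * R n (n-1) = R n (n-1) ^ n := by
    rw [← pow_succ, ← pow_succ]; congr 1; omega
  calc (σ n 1 * R n (n-1)) ^ (n-1)
      = R n (n-1) ^ (n-2) * B n (n-2) * (σ n 1 * R n (n-1)) := by
        rw [e1, pow_form hn (n-2) le_rfl]
    _ = R n (n-1) ^ (n-2) * (B n (n-2) * σ n 1) * R n (n-1) := by
        simp only [mul_assoc]
    _ = R n (n-1) ^ n := by rw [B_sigma1, e2, e3]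
    _ = Q n (n-1) ^ n := rho_pow_eq hn

lemma delta_eq : braidδ n = Q n (n-1) := by
  suffices h : ∀ m, ((List.range m).map (fun k => σ n (k + 1))).prod = Q n m from h (n-1)
  intro m
  induction m with
  | zero => simp [Q]
  | succ m ih => rw [List.range_succ]; simp [ih, ← Q_succ]

lemma rho_eq : braidρ n = R n (n-1) := by
  suffices h : ∀ m, (((List.range m).map (fun k => σ n (k + 1))).reverse).prod = R n m from
    h (n-1)
  intro m
  induction m with
  | zero => simp [R]
  | succ m ih => rw [List.range_succ]; simp [ih, ← R_succ]

lemma main2 (hn : 3 ≤ n) (i j : ℕ) (hi : 1 ≤ i) (hj : 1 ≤ j) :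
    σ n 1 ^ i * braidρ n * (σ n 1 * braidρ n) ^ (n - 2) * (σ n 1 ^ j * braidρ n) =
      braidθ n * (σ n 1 ^ (i + j - 1) * braidρ n) := by
  obtain ⟨i', rfl⟩ : ∃ i', i = i' + 1 := ⟨i - 1, by omega⟩
  obtain ⟨j', rfl⟩ : ∃ j', j = j' + 1 := ⟨j - 1, by omega⟩
  have hθ : braidθ n = Q n (n-1) ^ n := by rw [braidθ, delta_eq]
  rw [rho_eq, hθ, show i' + 1 + (j' + 1) - 1 = i' + (j' + 1) from by omega]
  have hc : Commute (Q n (n-1) ^ n) (σ n 1) := theta_comm_sigma1 hn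
  have hcomm : ∀ a : ℕ, σ n 1 ^ a * Q n (n-1) ^ n = Q n (n-1) ^ n * σ n 1 ^ a :=
    fun a => ((hc.pow_right a).eq).symm
  have e1 : σ n 1 ^ (i'+1) * R n (n-1) * (σ n 1 * R n (n-1)) ^ (n - 2) *
      (σ n 1 ^ (j'+1) * R n (n-1)) =
      σ n 1 ^ i' * ((σ n 1 * R n (n-1)) * (σ n 1 * R n (n-1)) ^ (n - 2)) *
      (σ n 1 ^ j' * (σ n 1 * R n (n-1))) := by
    rw [pow_succ, pow_succ]
    simp only [mul_assoc]
  have e2 : (σ n 1 * R n (n-1)) * (σ n 1 * R n (n-1)) ^ (n - 2) =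
      (σ n 1 * R n (n-1)) ^ (n - 1) := by
    rw [← pow_succ']; congr 1; omega
  rw [e1, e2, key_pow hn]
  calc σ n 1 ^ i' * Q n (n-1) ^ n * (σ n 1 ^ j' * (σ n 1 * R n (n-1)))
      = Q n (n-1) ^ n * σ n 1 ^ i' * (σ n 1 ^ j' * (σ n 1 * R n (n-1))) := by
        rw [hcomm i']
    _ = Q n (n-1) ^ n * (σ n 1 ^ (i' + (j' + 1)) * R n (n-1)) := by
        rw [pow_add, pow_succ]
        simp only [mul_assoc]

end BraidAux


/-- in `B_n`, for positive integers `i, j`,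
`β(i,1,…,1,j)` with `n-2` ones in the middle equals `θ·β(i+j-1)`, i.e.
`σ_1^i ρ (σ_1 ρ)^{n-2} σ_1^j ρ = θ σ_1^{i+j-1} ρ`. -/
theorem beta_ones_reduction (n : ℕ) (hn : 3 ≤ n) (i j : ℕ) (hi : 1 ≤ i) (hj : 1 ≤ j) :
    braidβ n (i :: (List.replicate (n - 2) 1 ++ [j])) = braidθ n * braidβ n [i + j - 1] ∧
    σ n 1 ^ i * braidρ n * (σ n 1 * braidρ n) ^ (n - 2) * (σ n 1 ^ j * braidρ n) =
      braidθ n * (σ n 1 ^ (i + j - 1) * braidρ n) := by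
  have h2 := BraidAux.main2 (n := n) hn i j hi hj
  refine ⟨?_, h2⟩
  rw [braidβ, braidβ]
  simp only [List.map_cons, List.map_append, List.map_replicate, List.map_nil, List.prod_cons,
    List.prod_append, List.prod_replicate, List.prod_nil, pow_one, mul_one]
  simp only [mul_assoc] at h2 ⊢
  exact h2
end

section
/- Under the Artin action of B_n on F_n with generators a_1,…,a_n, the full twist θ = (σ_1⋯σ_{n-1})^n acts by conjugation by a_n: a_i^θ = a_n a_i a_n^{-1} for all i = 1,…,n. -/
namespace Artin

/-- `A j` is the generator `a_j = ξ_1⋯ξ_j` of the free group `F_n` (with `A 0 = 1`). -/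
def A (j : ℕ) : FreeGroup ℕ := if j = 0 then 1 else FreeGroup.of j

/-- The effect of the Artin generator `σ_i` on the generators `a_j`. -/
def fwd (i : ℕ) : ℕ → FreeGroup ℕ := fun j =>
  if 1 ≤ i ∧ j = i then A (i + 1) * (A i)⁻¹ * A (i - 1) else FreeGroup.of j

/-- The effect of `σ_i⁻¹` on the generators `a_j`. -/
def bwd (i : ℕ) : ℕ → FreeGroup ℕ := fun j =>
  if 1 ≤ i ∧ j = i then A (i - 1) * (A i)⁻¹ * A (i + 1) else FreeGroup.of j

lemma lift_fwd_A (i k : ℕ) (h : k ≠ i) : FreeGroup.lift (fwd i) (A k) = A k := by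
  by_cases hk : k = 0
  · simp [A, hk]
  · simp only [A, if_neg hk, FreeGroup.lift_apply_of, fwd]
    rw [if_neg]
    rintro ⟨-, rfl⟩; exact h rfl

lemma lift_bwd_A (i k : ℕ) (h : k ≠ i) : FreeGroup.lift (bwd i) (A k) = A k := by
  by_cases hk : k = 0
  · simp [A, hk]
  · simp only [A, if_neg hk, FreeGroup.lift_apply_of, bwd]
    rw [if_neg]
    rintro ⟨-, rfl⟩; exact h rfl

lemma comp_bwd_fwd (i : ℕ) :
    (FreeGroup.lift (bwd i)).comp (FreeGroup.lift (fwd i)) = MonoidHom.id _ := by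
  apply FreeGroup.ext_hom
  intro j
  simp only [MonoidHom.comp_apply, FreeGroup.lift_apply_of, MonoidHom.id_apply]
  unfold fwd
  by_cases h : 1 ≤ i ∧ j = i
  · obtain ⟨hi, hji⟩ := h
    subst hji
    rw [if_pos ⟨hi, rfl⟩]
    have hj : A j = FreeGroup.of j := by simp only [A, if_neg (by omega : ¬ j = 0)]
    rw [map_mul, map_mul, map_inv]
    rw [lift_bwd_A j (j + 1) (by omega), lift_bwd_A j (j - 1) (by omega)]
    rw [← hj]
    have hAj : FreeGroup.lift (bwd j) (A j) = A (j - 1) * (A j)⁻¹ * A (j + 1) := by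
      rw [hj, FreeGroup.lift_apply_of, bwd, if_pos ⟨hi, rfl⟩, hj]
    rw [hAj]
    group
  · rw [if_neg h]
    simp only [FreeGroup.lift_apply_of, bwd]
    rw [if_neg h]

lemma comp_fwd_bwd (i : ℕ) :
    (FreeGroup.lift (fwd i)).comp (FreeGroup.lift (bwd i)) = MonoidHom.id _ := by
  apply FreeGroup.ext_hom
  intro j
  simp only [MonoidHom.comp_apply, FreeGroup.lift_apply_of, MonoidHom.id_apply]
  unfold bwd
  by_cases h : 1 ≤ i ∧ j = i
  · obtain ⟨hi, hji⟩ := h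
    subst hji
    rw [if_pos ⟨hi, rfl⟩]
    have hj : A j = FreeGroup.of j := by simp only [A, if_neg (by omega : ¬ j = 0)]
    rw [map_mul, map_mul, map_inv]
    rw [lift_fwd_A j (j + 1) (by omega), lift_fwd_A j (j - 1) (by omega)]
    rw [← hj]
    have hAj : FreeGroup.lift (fwd j) (A j) = A (j + 1) * (A j)⁻¹ * A (j - 1) := by
      rw [hj, FreeGroup.lift_apply_of, fwd, if_pos ⟨hi, rfl⟩, hj]
    rw [hAj]
    group
  · rw [if_neg h]
    simp only [FreeGroup.lift_apply_of, fwd]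
    rw [if_neg h]

/-- The automorphism of `F_n` given by the Artin generator `σ_i`. -/
def gen (i : ℕ) : MulAut (FreeGroup ℕ) where
  toFun := FreeGroup.lift (fwd i)
  invFun := FreeGroup.lift (bwd i)
  left_inv x := by
    have := DFunLike.congr_fun (comp_bwd_fwd i) x
    simpa using this
  right_inv x := by
    have := DFunLike.congr_fun (comp_fwd_bwd i) x
    simpa using this
  map_mul' := map_mul _

/-- The Artin representation, as a homomorphism from words in the braid generators
(`FreeGroup ℕ`, letter `i` standing for `σ_i`) to the opposite of `Aut(F_n)`;
the opposite group is used so that `w^{βγ} = (w^β)^γ`. -/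
def rep : FreeGroup ℕ →* (MulAut (FreeGroup ℕ))ᵐᵒᵖ :=
  FreeGroup.lift (fun i => MulOpposite.op (gen i))

/-- The (right) Artin action: `act b w = w^b`. -/
def act (b w : FreeGroup ℕ) : FreeGroup ℕ := (rep b).unop w


/-- The word `ρ = σ_{n-1} ⋯ σ_2 σ_1` in the braid generators. -/
def ρw (n : ℕ) : FreeGroup ℕ :=
  (((List.range (n - 1)).map (fun k => FreeGroup.of (k + 1))).reverse).prod

/-- The word `δ = σ_1 σ_2 ⋯ σ_{n-1}` in the braid generators. -/
def δw (n : ℕ) : FreeGroup ℕ :=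
  ((List.range (n - 1)).map (fun k => FreeGroup.of (k + 1))).prod

/-- The full-twist word `θ = (σ_1 ⋯ σ_{n-1})^n`. -/
def θw (n : ℕ) : FreeGroup ℕ := δw n ^ n

/-- The word `β(m) = σ_1^m ρ`. -/
def βw (n m : ℕ) : FreeGroup ℕ := FreeGroup.of 1 ^ m * ρw n


/-! ### Auxiliary lemmas -/

lemma act_one' (w : FreeGroup ℕ) : act 1 w = w := by
  simp [act, map_one]

lemma act_mul' (b c w : FreeGroup ℕ) : act (b * c) w = act c (act b w) := by
  simp [act, map_mul]

lemma act_map_mul (b x y : FreeGroup ℕ) : act b (x * y) = act b x * act b y :=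
  map_mul _ _ _

lemma act_map_inv (b x : FreeGroup ℕ) : act b x⁻¹ = (act b x)⁻¹ :=
  map_inv _ _

lemma act_of' (i : ℕ) (w : FreeGroup ℕ) :
    act (FreeGroup.of i) w = FreeGroup.lift (fwd i) w := by
  simp only [act, rep, FreeGroup.lift_apply_of]
  rfl

lemma act_A_ne (i j : ℕ) (h : j ≠ i) : act (FreeGroup.of i) (A j) = A j := by
  rw [act_of']; exact lift_fwd_A i j h

lemma act_A_self (i : ℕ) (h : 1 ≤ i) :
    act (FreeGroup.of i) (A i) = A (i + 1) * (A i)⁻¹ * A (i - 1) := by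
  rw [act_of']
  have hi : A i = FreeGroup.of i := by simp [A]; omega
  rw [hi, FreeGroup.lift_apply_of, fwd, if_pos ⟨h, rfl⟩, hi]

/-- Partial product `σ_1 ⋯ σ_m`. -/
def δpart (m : ℕ) : FreeGroup ℕ :=
  ((List.range m).map (fun k => FreeGroup.of (k + 1))).prod

lemma δpart_succ (m : ℕ) : δpart (m + 1) = δpart m * FreeGroup.of (m + 1) := by
  simp [δpart, List.range_succ]

lemma act_δpart_high (m : ℕ) : ∀ j, m < j → act (δpart m) (A j) = A j := by
  induction m with
  | zero => intro j _; simpa [δpart] using act_one' (A j)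
  | succ m IH =>
    intro j hj
    rw [δpart_succ, act_mul', IH j (by omega), act_A_ne _ _ (by omega)]

lemma act_δpart (m : ℕ) : ∀ j, 1 ≤ j → j ≤ m + 1 →
    act (δpart m) (A j) = A (m + 1) * (A m)⁻¹ * A (j - 1) := by
  induction m with
  | zero =>
    intro j h1 h2
    have hj : j = 1 := by omega
    subst hj
    simpa [δpart, A] using act_one' (A 1)
  | succ m IH =>
    intro j h1 h2
    rcases Nat.lt_or_ge j (m + 2) with hj | hj
    · rw [δpart_succ, act_mul', IH j h1 (by omega), act_map_mul, act_map_mul,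
        act_map_inv, act_A_self (m + 1) (by omega), act_A_ne _ _ (by omega),
        act_A_ne _ _ (by omega : j - 1 ≠ m + 1)]
      simp only [Nat.add_sub_cancel]
      group
    · have hj' : j = m + 2 := by omega
      subst hj'
      rw [δpart_succ, act_mul', act_δpart_high m _ (by omega),
        act_A_ne _ _ (by omega)]
      show A (m + 2) = A (m + 2) * (A (m + 1))⁻¹ * A (m + 1)
      group

lemma δw_eq (n : ℕ) : δw n = δpart (n - 1) := rfl

lemma act_δ_A (n : ℕ) (hn : 1 ≤ n) (j : ℕ) (h1 : 1 ≤ j) (h2 : j ≤ n) :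
    act (δw n) (A j) = A n * (A (n - 1))⁻¹ * A (j - 1) := by
  rw [δw_eq]
  have h : n - 1 + 1 = n := by omega
  rw [show act (δpart (n - 1)) (A j) = A (n - 1 + 1) * (A (n - 1))⁻¹ * A (j - 1) from
    act_δpart (n - 1) j h1 (by omega), h]

lemma act_pow (n : ℕ) (hn : 3 ≤ n) (k : ℕ) (hk : k ≤ n) (j : ℕ) (h1 : 1 ≤ j) (h2 : j ≤ n) :
    act (δw n ^ k) (A j) =
      if k ≤ j then A n * (A (n - k))⁻¹ * A (j - k)
      else A n * (A (n - k))⁻¹ * A (n - k + j) * (A n)⁻¹ := by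
  have hn1 : 1 ≤ n := by omega
  induction k with
  | zero =>
    rw [pow_zero, act_one', if_pos (by omega)]
    show A j = A n * (A n)⁻¹ * A j
    group
  | succ k IH =>
    have hk' : k ≤ n := by omega
    rw [pow_succ, act_mul', IH hk']
    by_cases hkj : k + 1 ≤ j
    · rw [if_pos (by omega : k ≤ j), if_pos hkj, act_map_mul, act_map_mul, act_map_inv,
        act_δ_A n hn1 n (by omega) le_rfl,
        act_δ_A n hn1 (n - k) (by omega) (by omega),
        act_δ_A n hn1 (j - k) (by omega) (by omega)]
      simp only [Nat.sub_sub]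
      group
    · by_cases hkj2 : k ≤ j
      · -- k = j
        have hkj3 : k = j := by omega
        rw [if_pos hkj2, if_neg hkj]
        have h0 : A (j - k) = 1 := by rw [hkj3]; simp [A]
        have h1' : n - (k + 1) + j = n - 1 := by omega
        rw [h0, mul_one, act_map_mul, act_map_inv,
          act_δ_A n hn1 n (by omega) le_rfl,
          act_δ_A n hn1 (n - k) (by omega) (by omega), h1']
        simp only [Nat.sub_sub]
        group
      · rw [if_neg hkj2, if_neg hkj, act_map_mul, act_map_mul, act_map_mul,
          act_map_inv, act_map_inv,
          act_δ_A n hn1 n (by omega) le_rfl,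
          act_δ_A n hn1 (n - k) (by omega) (by omega),
          act_δ_A n hn1 (n - k + j) (by omega) (by omega)]
        have h1' : n - k + j - 1 = n - (k + 1) + j := by omega
        rw [h1']
        simp only [Nat.sub_sub]
        group

/-- the full twist `θ = (σ_1⋯σ_{n-1})^n` acts on `F_n` by conjugation by `a_n`:
`a_i^θ = a_n a_i a_n⁻¹` for all `i = 1, …, n`. -/
theorem fullTwist_acts_by_conj (n : ℕ) (hn : 3 ≤ n) (i : ℕ) (h1 : 1 ≤ i) (h2 : i ≤ n) :
    act (θw n) (A i) = A n * A i * (A n)⁻¹ := by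
  have h := act_pow n hn n le_rfl i h1 h2
  rw [θw] at *
  rw [h]
  by_cases hin : n ≤ i
  · have : i = n := by omega
    subst this
    rw [if_pos le_rfl]
    simp only [Nat.sub_self]
    have hA0 : A 0 = 1 := by simp [A]
    rw [hA0]
    group
  · rw [if_neg hin]
    simp only [Nat.sub_self]
    have : A 0 = 1 := by simp [A]
    rw [this]
    group

end Artin
end
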